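/- arXiv:1407.8065 — 3 statements merged into one kernel-verified Lean document; each statement's English description precedes it below -/
import Mathlib

section
/- Let ε ∈ (0,1), n ≥ 1, and let φ ∈ Φ be the true parameter. Then the probability that |φ^LS_n(x^n) − φ| > δ₁(x^n, ε) is at most ε, where δ₁(x^n, ε) = (1/|f′(φ^LS_n)|)·√((2/n)·V_max·ln(2/ε)) + (L/n)·V_max·ln(2/ε). -/
open MeasureTheory ProbabilityTheory

section AuxiliaryLemmas
open Set Real MeasureTheory ProbabilityTheory

lemma abs_le_of_deriv_le_deriv {A B : ℝ} {g g' b b' : ℝ → ℝ}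
    (hg : ∀ x ∈ Icc A B, HasDerivWithinAt g (g' x) (Icc A B) x)
    (hb : ∀ x ∈ Icc A B, HasDerivWithinAt b (b' x) (Icc A B) x)
    (bound : ∀ x ∈ Icc A B, |g' x| ≤ b' x)
    (h0 : |g A| ≤ b A) :
    ∀ x ∈ Icc A B, |g x| ≤ b x := by
  intro x hx
  have hgc : ContinuousOn g (Icc A B) := fun y hy => (hg y hy).continuousWithinAt
  have hbc : ContinuousOn b (Icc A B) := fun y hy => (hb y hy).continuousWithinAt
  have key := image_norm_le_of_norm_deriv_right_le_deriv_boundary' (f := g) (f' := g') hgc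
    (fun y hy => ((hg y (Ico_subset_Icc_self hy)).mono_of_mem_nhdsWithin (Icc_mem_nhdsGE_of_mem hy)))
    (by simpa using h0) hbc
    (fun y hy => ((hb y (Ico_subset_Icc_self hy)).mono_of_mem_nhdsWithin (Icc_mem_nhdsGE_of_mem hy)))
    (fun y hy => by simpa using bound y (Ico_subset_Icc_self hy))
  simpa using key hx

section HoeffdingReal

variable {p : ℝ}

private lemma q_pos (hp0 : 0 ≤ p) (hp1 : p ≤ 1) (h : ℝ) : 0 < 1 - p + p * exp h := by
  rcases eq_or_lt_of_le hp0 with h0 | h0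
  · simp [← h0]
  · have := exp_pos h
    nlinarith

/-- The function `F h = -p h + log (1 - p + p e^h)` and its two derivatives. -/
private lemma hasDerivF (hp0 : 0 ≤ p) (hp1 : p ≤ 1) (h : ℝ) :
    HasDerivAt (fun h => -(p * h) + log (1 - p + p * exp h))
      (-p + p * exp h / (1 - p + p * exp h)) h := by
  have h1 : HasDerivAt (fun h : ℝ => 1 - p + p * exp h) (p * exp h) h :=
    (((hasDerivAt_exp h).const_mul p).const_add (1 - p))
  have h2 := h1.log (q_pos hp0 hp1 h).ne'
  have h4 := ((hasDerivAt_id h).const_mul p).neg.add h2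
  exact h4.congr_deriv (by ring)

private lemma hasDerivF' (hp0 : 0 ≤ p) (hp1 : p ≤ 1) (h : ℝ) :
    HasDerivAt (fun h => -p + p * exp h / (1 - p + p * exp h))
      (p * exp h * (1 - p) / (1 - p + p * exp h) ^ 2) h := by
  have h1 : HasDerivAt (fun h : ℝ => 1 - p + p * exp h) (p * exp h) h :=
    (((hasDerivAt_exp h).const_mul p).const_add (1 - p))
  have h2 : HasDerivAt (fun h : ℝ => p * exp h) (p * exp h) h :=
    (hasDerivAt_exp h).const_mul p
  have h3 := (h2.div h1 (q_pos hp0 hp1 h).ne')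
  have : (p * exp h * (1 - p + p * exp h) - p * exp h * (p * exp h)) /
      (1 - p + p * exp h) ^ 2 = p * exp h * (1 - p) / (1 - p + p * exp h) ^ 2 := by ring
  rw [this] at h3
  exact h3.const_add (-p)

private lemma F''_le (hp0 : 0 ≤ p) (hp1 : p ≤ 1) (h : ℝ) :
    |p * exp h * (1 - p) / (1 - p + p * exp h) ^ 2| ≤ 1 / 4 := by
  have hq := q_pos hp0 hp1 h
  have he := exp_pos h
  have hnum : 0 ≤ p * exp h * (1 - p) := mul_nonneg (by positivity) (by linarith)
  rw [abs_of_nonneg (div_nonneg hnum (sq_nonneg _))]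
  rw [div_le_iff₀ (pow_pos hq 2)]
  nlinarith [sq_nonneg (1 - p - p * exp h)]

private lemma F'_le (hp0 : 0 ≤ p) (hp1 : p ≤ 1) (h : ℝ) :
    |(-p + p * exp h / (1 - p + p * exp h))| ≤ |h| / 4 := by
  have key := Convex.norm_image_sub_le_of_norm_hasDerivWithin_le
    (f := fun h => -p + p * exp h / (1 - p + p * exp h))
    (f' := fun h => p * exp h * (1 - p) / (1 - p + p * exp h) ^ 2)
    (C := 1/4) (s := univ)
    (fun x _ => (hasDerivF' hp0 hp1 x).hasDerivWithinAt)
    (fun x _ => by rw [Real.norm_eq_abs]; exact F''_le hp0 hp1 x) convex_univ (mem_univ 0) (mem_univ h)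
  simp only [exp_zero, mul_one] at key
  have h0 : -p + p / (1 - p + p) = 0 := by
    have : (1 : ℝ) - p + p = 1 := by ring
    rw [this]; ring
  rw [Real.norm_eq_abs, Real.norm_eq_abs, h0, sub_zero, sub_zero] at key
  linarith [key]

private lemma F_le (hp0 : 0 ≤ p) (hp1 : p ≤ 1) (h : ℝ) :
    -(p * h) + log (1 - p + p * exp h) ≤ h ^ 2 / 8 := by
  set F : ℝ → ℝ := fun h => -(p * h) + log (1 - p + p * exp h) with hF
  have hF0 : F 0 = 0 := by
    have h1 : (1 : ℝ) - p + p = 1 := by ring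
    simp [hF, h1]
  -- prove |F h| ≤ h^2/8 by cases on the sign of h
  rcases le_total 0 h with hpos | hneg
  · have key := abs_le_of_deriv_le_deriv (A := 0) (B := h)
      (g := F) (g' := fun x => -p + p * exp x / (1 - p + p * exp x))
      (b := fun x => x ^ 2 / 8) (b' := fun x => x / 4)
      (fun x _ => (hasDerivF hp0 hp1 x).hasDerivWithinAt)
      (fun x _ => by
        have : HasDerivAt (fun x : ℝ => x ^ 2 / 8) (x / 4) x := by
          have := ((hasDerivAt_pow 2 x).div_const 8)
          exact this.congr_deriv (by ring)
        exact this.hasDerivWithinAt)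
      (fun x hx => by
        have := F'_le hp0 hp1 x
        rwa [abs_of_nonneg hx.1] at this)
      (by simp [hF0])
    have := key h ⟨hpos, le_refl h⟩
    calc F h ≤ |F h| := le_abs_self _
    _ ≤ h ^ 2 / 8 := this
  · have key := abs_le_of_deriv_le_deriv (A := 0) (B := -h)
      (g := fun x => F (-x)) (g' := fun x => -(-p + p * exp (-x) / (1 - p + p * exp (-x))))
      (b := fun x => x ^ 2 / 8) (b' := fun x => x / 4)
      (fun x _ => by
        have := ((hasDerivF hp0 hp1 (-x)).comp x (hasDerivAt_neg x))
        exact this.hasDerivWithinAt.congr_deriv (by ring))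
      (fun x _ => by
        have : HasDerivAt (fun x : ℝ => x ^ 2 / 8) (x / 4) x := by
          have := ((hasDerivAt_pow 2 x).div_const 8)
          exact this.congr_deriv (by ring)
        exact this.hasDerivWithinAt)
      (fun x hx => by
        have h5 := F'_le hp0 hp1 (-x)
        rw [abs_neg, abs_of_nonneg hx.1] at h5
        show |-(-p + p * exp (-x) / (1 - p + p * exp (-x)))| ≤ x / 4
        rwa [abs_neg])
      (by simp [hF0])
    have := key (-h) ⟨by linarith, le_refl _⟩
    simp only [neg_neg] at this
    calc F h ≤ |F h| := le_abs_self _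
    _ ≤ (-h) ^ 2 / 8 := this
    _ = h ^ 2 / 8 := by ring_nf

/-- The key real inequality behind Hoeffding's lemma. -/
lemma hoeffding_real (hp0 : 0 ≤ p) (hp1 : p ≤ 1) (h : ℝ) :
    (1 - p) * exp (-(p * h)) + p * exp ((1 - p) * h) ≤ exp (h ^ 2 / 8) := by
  have hq := q_pos hp0 hp1 h
  have lhs_eq : (1 - p) * exp (-(p * h)) + p * exp ((1 - p) * h)
      = exp (-(p * h) + log (1 - p + p * exp h)) := by
    rw [exp_add, exp_log hq]
    rw [show (1 - p) * h = h + -(p*h) by ring, exp_add]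
    ring
  rw [lhs_eq]
  exact exp_le_exp.mpr (F_le hp0 hp1 h)

end HoeffdingReal

section Hoeffding

variable {Ω : Type*} [MeasurableSpace Ω] {μ : Measure Ω} [IsProbabilityMeasure μ]

lemma integrable_of_mem_Icc {Y : Ω → ℝ} (hY : AEStronglyMeasurable Y μ) {a b : ℝ}
    (hb : ∀ᵐ ω ∂μ, Y ω ∈ Icc a b) : Integrable Y μ := by
  refine Integrable.mono' (integrable_const (|a| + |b|)) hY ?_
  filter_upwards [hb] with ω hω
  rw [Real.norm_eq_abs, abs_le]
  constructor
  · have := neg_abs_le a; have := hω.1; linarith [abs_nonneg b]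
  · have := le_abs_self b; have := hω.2; linarith [abs_nonneg a]

lemma integrable_exp_of_mem_Icc {Y : Ω → ℝ} (hY : Measurable Y) {a b : ℝ}
    (hb : ∀ᵐ ω ∂μ, Y ω ∈ Icc a b) (t : ℝ) :
    Integrable (fun ω => exp (t * Y ω)) μ := by
  refine Integrable.mono' (integrable_const (exp (|t| * (|a| + |b|))))
    ((hY.const_mul t).exp.aestronglyMeasurable) ?_
  filter_upwards [hb] with ω hω
  rw [Real.norm_eq_abs, abs_of_nonneg (exp_pos _).le, exp_le_exp]
  have h1 : |Y ω| ≤ |a| + |b| := by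
    rw [abs_le]
    constructor
    · have := neg_abs_le a; have := hω.1; linarith [abs_nonneg b]
    · have := le_abs_self b; have := hω.2; linarith [abs_nonneg a]
  calc t * Y ω ≤ |t * Y ω| := le_abs_self _
  _ = |t| * |Y ω| := abs_mul _ _
  _ ≤ |t| * (|a| + |b|) := by gcongr

/-- **Hoeffding's lemma**: a centered random variable in `[a,b]` has
mgf at most `exp (t² (b-a)² / 8)`. -/
lemma mgf_le_hoeffding {Y : Ω → ℝ} (hY : Measurable Y) {a b : ℝ} (hab : a < b)
    (hb : ∀ᵐ ω ∂μ, Y ω ∈ Icc a b) (hmean : ∫ ω, Y ω ∂μ = 0) (t : ℝ) :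
    mgf Y μ t ≤ exp (t ^ 2 * (b - a) ^ 2 / 8) := by
  have hba : (0:ℝ) < b - a := by linarith
  have hIntY : Integrable Y μ := integrable_of_mem_Icc hY.aestronglyMeasurable hb
  have ha0 : a ≤ 0 := by
    rw [← hmean]
    have : a = ∫ _ω, a ∂μ := by simp
    rw [this]
    exact integral_mono_ae (integrable_const a) hIntY (hb.mono fun ω hω => hω.1)
  have hb0 : 0 ≤ b := by
    rw [← hmean]
    have : b = ∫ _ω, b ∂μ := by simp
    rw [this]
    exact integral_mono_ae hIntY (integrable_const b) (hb.mono fun ω hω => hω.2)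
  -- pointwise convexity bound
  have hpt : ∀ᵐ ω ∂μ, exp (t * Y ω) ≤
      (exp (t*a) * b - exp (t*b) * a) / (b - a) + ((exp (t*b) - exp (t*a)) / (b - a)) * Y ω := by
    filter_upwards [hb] with ω hω
    have hl1 : (0:ℝ) ≤ (b - Y ω) / (b - a) := div_nonneg (by linarith [hω.2]) hba.le
    have hl2 : (0:ℝ) ≤ (Y ω - a) / (b - a) := div_nonneg (by linarith [hω.1]) hba.le
    have hsum : (b - Y ω) / (b - a) + (Y ω - a) / (b - a) = 1 := by
      field_simp
      ring
    have hcvx := convexOn_exp.2 (mem_univ (t * a)) (mem_univ (t * b)) hl1 hl2 hsum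
    simp only [smul_eq_mul] at hcvx
    have harg : (b - Y ω) / (b - a) * (t * a) + (Y ω - a) / (b - a) * (t * b) = t * Y ω := by
      field_simp
      ring
    rw [harg] at hcvx
    calc exp (t * Y ω) ≤ (b - Y ω)/(b-a) * exp (t*a) + (Y ω - a)/(b-a) * exp (t*b) := hcvx
    _ = (exp (t*a) * b - exp (t*b) * a) / (b - a)
        + ((exp (t*b) - exp (t*a)) / (b - a)) * Y ω := by ring
  have hIntRHS : Integrable (fun ω => (exp (t*a) * b - exp (t*b) * a) / (b - a)
      + ((exp (t*b) - exp (t*a)) / (b - a)) * Y ω) μ :=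
    (integrable_const _).add (hIntY.const_mul _)
  have hstep1 : mgf Y μ t ≤ (exp (t*a) * b - exp (t*b) * a) / (b - a) := by
    have := integral_mono_ae (integrable_exp_of_mem_Icc hY hb t) hIntRHS hpt
    rw [integral_add (integrable_const _) (hIntY.const_mul _), integral_const,
      integral_const_mul, hmean] at this
    simpa [mgf] using this
  -- now the real inequality
  set p := -a / (b - a) with hp
  have hp0 : 0 ≤ p := div_nonneg (by linarith) hba.le
  have hp1 : p ≤ 1 := by
    rw [hp, div_le_one hba]; linarith
  have key := hoeffding_real hp0 hp1 (t * (b - a))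
  have e1 : -(p * (t * (b - a))) = t * a := by
    rw [hp]; field_simp
  have e2 : (1 - p) * (t * (b - a)) = t * b := by
    rw [hp]; field_simp; ring
  have e3 : (1 - p) = b / (b - a) := by rw [hp]; field_simp; ring
  rw [e1, e2] at key
  have e4 : (1 - p) * exp (t*a) + p * exp (t*b) = (exp (t*a) * b - exp (t*b) * a) / (b - a) := by
    rw [e3, hp]; field_simp; ring
  rw [e4] at key
  have e5 : (t * (b - a)) ^ 2 / 8 = t ^ 2 * (b - a) ^ 2 / 8 := by ring
  rw [e5] at key
  exact hstep1.trans key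

/-- One-sided Hoeffding inequality for sums of centered iid bounded variables. -/
lemma hoeffding_sum {n : ℕ} {Y : Fin n → Ω → ℝ} (hmeas : ∀ i, Measurable (Y i))
    (hindep : iIndepFun Y μ) {a b : ℝ} (hab : a < b)
    (hb : ∀ i, ∀ᵐ ω ∂μ, Y i ω ∈ Icc a b) (hmean : ∀ i, ∫ ω, Y i ω ∂μ = 0)
    {t : ℝ} (ht : 0 ≤ t) :
    μ {ω | (n : ℝ) * t ≤ ∑ i, Y i ω} ≤ ENNReal.ofReal (exp (-2 * n * t ^ 2 / (b - a) ^ 2)) := by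
  have hba : (0:ℝ) < b - a := by linarith
  set lam := 4 * t / (b - a) ^ 2 with hlam
  have hlam0 : 0 ≤ lam := by positivity
  have hInt : ∀ i ∈ Finset.univ, Integrable (fun ω => exp (lam * Y i ω)) μ :=
    fun i _ => integrable_exp_of_mem_Icc (hmeas i) (hb i) lam
  have hIntSum := hindep.integrable_exp_mul_sum hmeas hInt
  have hchern := measure_ge_le_exp_mul_mgf (X := ∑ i, Y i) (μ := μ) ((n : ℝ) * t) hlam0 hIntSum
  have hmgf : mgf (∑ i, Y i) μ lam ≤ exp (n * (lam ^ 2 * (b - a) ^ 2 / 8)) := by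
    rw [hindep.mgf_sum hmeas]
    refine le_trans (Finset.prod_le_prod (fun i _ => mgf_nonneg)
      (fun i _ => mgf_le_hoeffding (hmeas i) hab (hb i) (hmean i) lam)) ?_
    rw [Finset.prod_const, Finset.card_univ, Fintype.card_fin, ← exp_nat_mul]
  have hset : {ω | (n:ℝ) * t ≤ ∑ i, Y i ω} = {ω | (n:ℝ) * t ≤ (∑ i, Y i) ω} := by
    ext ω; simp
  have hfinal : (μ {ω | (n:ℝ) * t ≤ ∑ i, Y i ω}).toReal ≤ exp (-2 * n * t ^ 2 / (b - a) ^ 2) := by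
    rw [hset]
    refine hchern.trans ?_
    calc exp (-lam * ((n:ℝ) * t)) * mgf (∑ i, Y i) μ lam
        ≤ exp (-lam * ((n:ℝ) * t)) * exp (n * (lam ^ 2 * (b - a) ^ 2 / 8)) :=
          mul_le_mul_of_nonneg_left hmgf (exp_pos _).le
    _ = exp (-lam * ((n:ℝ) * t) + n * (lam ^ 2 * (b - a) ^ 2 / 8)) := (exp_add _ _).symm
    _ = exp (-2 * n * t ^ 2 / (b - a) ^ 2) := by
        congr 1
        rw [hlam]
        field_simp
        ring
  calc μ {ω | (n:ℝ) * t ≤ ∑ i, Y i ω}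
      = ENNReal.ofReal (μ {ω | (n:ℝ) * t ≤ ∑ i, Y i ω}).toReal := by
        rw [ENNReal.ofReal_toReal (measure_ne_top μ _)]
  _ ≤ ENNReal.ofReal (exp (-2 * n * t ^ 2 / (b - a) ^ 2)) := ENNReal.ofReal_le_ofReal hfinal

end Hoeffding

section Taylor

variable {A B L : ℝ} {f f' f'' : ℝ → ℝ}

/-- Core Taylor-type bound for the inverse function, increasing case `u ≤ v`. -/
lemma key_taylor_inc
    (hf' : ∀ x ∈ Icc A B, HasDerivWithinAt f (f' x) (Icc A B) x)
    (hf'' : ∀ x ∈ Icc A B, HasDerivWithinAt f' (f'' x) (Icc A B) x)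
    (hpos : ∀ x ∈ Icc A B, 0 < f' x)
    (hLb : ∀ x ∈ Icc A B, |f'' x| ≤ L * f' x ^ 3)
    {u v : ℝ} (hu : u ∈ Icc A B) (hv : v ∈ Icc A B) (huv : u ≤ v) :
    |v - u - (f v - f u) / f' u| ≤ L / 2 * (f v - f u) ^ 2 := by
  have hsub : Icc u v ⊆ Icc A B := Icc_subset_Icc hu.1 hv.2
  -- step (i): |1/f' x - 1/f' u| ≤ L * (f x - f u) on [u,v]
  have step1 : ∀ x ∈ Icc u v, |(f' x)⁻¹ - (f' u)⁻¹| ≤ L * (f x - f u) := by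
    have := abs_le_of_deriv_le_deriv (A := u) (B := v)
      (g := fun x => (f' x)⁻¹ - (f' u)⁻¹) (g' := fun x => -f'' x / f' x ^ 2)
      (b := fun x => L * (f x - f u)) (b' := fun x => L * f' x)
      (fun x hx => (((hf'' x (hsub hx)).mono hsub).inv (hpos x (hsub hx)).ne').sub_const _)
      (fun x hx => (((hf' x (hsub hx)).mono hsub).sub_const _).const_mul L)
      (fun x hx => by
        have hp := hpos x (hsub hx)
        have hb := hLb x (hsub hx)
        rw [abs_div, abs_neg, abs_of_nonneg (sq_nonneg (f' x)), div_le_iff₀ (by positivity)]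
        calc |f'' x| ≤ L * f' x ^ 3 := hb
        _ = L * f' x * f' x ^ 2 := by ring)
      (by simp)
    simpa using this
  -- step (ii)
  have step2 := abs_le_of_deriv_le_deriv (A := u) (B := v)
    (g := fun x => x - u - (f x - f u) * (f' u)⁻¹)
    (g' := fun x => 1 - f' x * (f' u)⁻¹)
    (b := fun x => L / 2 * (f x - f u) ^ 2) (b' := fun x => L * (f x - f u) * f' x)
    (fun x hx => by
      have h1 := (((hf' x (hsub hx)).mono hsub).sub_const (f u)).mul_const (f' u)⁻¹
      have h2 := ((hasDerivWithinAt_id x (Icc u v)).sub_const u).sub h1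
      exact h2.congr_deriv (by ring))
    (fun x hx => by
      have h1 := ((((hf' x (hsub hx)).mono hsub).sub_const (f u)).pow 2).const_mul (L / 2)
      exact h1.congr_deriv (by ring))
    (fun x hx => by
      have hp := hpos x (hsub hx)
      have hpu := hpos u (hsub ⟨le_refl u, huv⟩)
      have key : 1 - f' x * (f' u)⁻¹ = -(f' x * ((f' u)⁻¹ - (f' x)⁻¹)) := by
        field_simp
        ring
      show |1 - f' x * (f' u)⁻¹| ≤ L * (f x - f u) * f' x
      rw [key, abs_neg, abs_mul, abs_of_pos hp, abs_sub_comm]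
      calc f' x * |(f' x)⁻¹ - (f' u)⁻¹| ≤ f' x * (L * (f x - f u)) :=
        mul_le_mul_of_nonneg_left (step1 x hx) hp.le
      _ = L * (f x - f u) * f' x := by ring)
    (by simp)
  have := step2 v ⟨huv, le_refl v⟩
  simpa [div_eq_mul_inv] using this

/-- Both directions, still assuming `f' > 0`. -/
lemma key_taylor_pos (hAB : A ≤ B)
    (hf' : ∀ x ∈ Icc A B, HasDerivWithinAt f (f' x) (Icc A B) x)
    (hf'' : ∀ x ∈ Icc A B, HasDerivWithinAt f' (f'' x) (Icc A B) x)
    (hpos : ∀ x ∈ Icc A B, 0 < f' x)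
    (hLb : ∀ x ∈ Icc A B, |f'' x| ≤ L * f' x ^ 3)
    {u v : ℝ} (hu : u ∈ Icc A B) (hv : v ∈ Icc A B) :
    |v - u - (f v - f u) / f' u| ≤ L / 2 * (f v - f u) ^ 2 := by
  rcases le_total u v with huv | hvu
  · exact key_taylor_inc hf' hf'' hpos hLb hu hv huv
  · -- reflect through x ↦ A + B - x
    have hmem : ∀ x ∈ Icc A B, A + B - x ∈ Icc A B := fun x hx =>
      ⟨by linarith [hx.2], by linarith [hx.1]⟩
    have hσ : ∀ x ∈ Icc A B, HasDerivWithinAt (fun y => A + B - y) (-1 : ℝ) (Icc A B) x :=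
      fun x hx => (hasDerivWithinAt_id x _).const_sub (A + B)
    set F : ℝ → ℝ := fun x => -f (A + B - x) with hF
    set F' : ℝ → ℝ := fun x => f' (A + B - x) with hF'
    set F'' : ℝ → ℝ := fun x => -f'' (A + B - x) with hF''
    have hdF : ∀ x ∈ Icc A B, HasDerivWithinAt F (F' x) (Icc A B) x := by
      intro x hx
      have := ((hf' _ (hmem x hx)).comp x (hσ x hx) (fun y hy => hmem y hy)).neg
      exact this.congr_deriv (by simp [hF'])
    have hdF' : ∀ x ∈ Icc A B, HasDerivWithinAt F' (F'' x) (Icc A B) x := by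
      intro x hx
      have := (hf'' _ (hmem x hx)).comp x (hσ x hx) (fun y hy => hmem y hy)
      exact this.congr_deriv (by simp [hF''])
    have hposF : ∀ x ∈ Icc A B, 0 < F' x := fun x hx => hpos _ (hmem x hx)
    have hLbF : ∀ x ∈ Icc A B, |F'' x| ≤ L * F' x ^ 3 := fun x hx => by
      simpa [hF', hF''] using hLb _ (hmem x hx)
    have key := key_taylor_inc hdF hdF' hposF hLbF (hmem u hu) (hmem v hv)
      (by linarith : A + B - u ≤ A + B - v)
    have e1 : A + B - (A + B - u) = u := by ring
    have e2 : A + B - (A + B - v) = v := by ring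
    simp only [hF, hF', e1, e2] at key
    have e3 : A + B - v - (A + B - u) - (-f v - -f u) / f' u
        = -(v - u - (f v - f u) / f' u) := by ring
    rw [e3, abs_neg] at key
    calc |v - u - (f v - f u) / f' u| ≤ L / 2 * (-f v - -f u) ^ 2 := key
    _ = L / 2 * (f v - f u) ^ 2 := by ring

/-- Constant sign of a nonvanishing continuous function on an interval. -/
lemma sign_const {g : ℝ → ℝ} (hg : ContinuousOn g (Icc A B))
    (hne : ∀ x ∈ Icc A B, g x ≠ 0) :
    (∀ x ∈ Icc A B, 0 < g x) ∨ (∀ x ∈ Icc A B, g x < 0) := by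
  by_cases hall : ∀ x ∈ Icc A B, 0 < g x
  · exact Or.inl hall
  · right
    push_neg at hall
    obtain ⟨x₀, hx₀, hle⟩ := hall
    have hx0neg : g x₀ < 0 := lt_of_le_of_ne hle (hne x₀ hx₀)
    intro y hy
    by_contra hge
    push_neg at hge
    have hypos : 0 < g y := lt_of_le_of_ne hge (Ne.symm (hne y hy))
    have hsub : uIcc x₀ y ⊆ Icc A B := by
      rw [uIcc_eq_union]
      exact union_subset (Icc_subset_Icc hx₀.1 hy.2) (Icc_subset_Icc hy.1 hx₀.2)
    have : (0:ℝ) ∈ uIcc (g x₀) (g y) := by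
      rw [mem_uIcc]
      exact Or.inl ⟨hx0neg.le, hypos.le⟩
    obtain ⟨z, hz, hz0⟩ := intermediate_value_uIcc (hg.mono hsub) this
    exact hne z (hsub hz) hz0

/-- The full Taylor-type bound for the inverse function. -/
lemma key_taylor (hAB : A ≤ B)
    (hf' : ∀ x ∈ Icc A B, HasDerivWithinAt f (f' x) (Icc A B) x)
    (hf'' : ∀ x ∈ Icc A B, HasDerivWithinAt f' (f'' x) (Icc A B) x)
    (hne : ∀ x ∈ Icc A B, f' x ≠ 0)
    (hLb : ∀ x ∈ Icc A B, |f'' x| ≤ L * |f' x| ^ 3)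
    {u v : ℝ} (hu : u ∈ Icc A B) (hv : v ∈ Icc A B) :
    |v - u| ≤ |f v - f u| / |f' u| + L / 2 * (f v - f u) ^ 2 := by
  have hf'cont : ContinuousOn f' (Icc A B) := fun y hy => (hf'' y hy).continuousWithinAt
  have hmain : |v - u - (f v - f u) / f' u| ≤ L / 2 * (f v - f u) ^ 2 := by
    rcases sign_const hf'cont hne with hpos | hneg
    · exact key_taylor_pos hAB hf' hf'' hpos
        (fun x hx => by rw [← abs_of_pos (hpos x hx)]; exact hLb x hx) hu hv
    · have key := key_taylor_pos hAB (f := fun x => -f x) (f' := fun x => -f' x)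
        (f'' := fun x => -f'' x)
        (fun x hx => (hf' x hx).neg) (fun x hx => (hf'' x hx).neg)
        (fun x hx => by
          show (0:ℝ) < -f' x
          linarith [hneg x hx])
        (fun x hx => by
          show |-f'' x| ≤ L * (-f' x) ^ 3
          rw [abs_neg, show -f' x = |f' x| from (abs_of_neg (hneg x hx)).symm]
          exact hLb x hx) hu hv
      have e : (-f v - -f u) / -f' u = (f v - f u) / f' u := by
        rw [show -f v - -f u = -(f v - f u) by ring, neg_div_neg_eq]
      have e2 : (-f v - -f u) ^ 2 = (f v - f u) ^ 2 := by ring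
      rw [e, e2] at key
      exact key
  have habs : |v - u| ≤ |v - u - (f v - f u) / f' u| + |(f v - f u) / f' u| := by
    have h7 := abs_add_le (v - u - (f v - f u) / f' u) ((f v - f u) / f' u)
    simpa using h7
  refine habs.trans ?_
  rw [abs_div]
  linarith [hmain]

end Taylor

/-- The least-squares projection does not increase the distance to points of the range. -/
lemma proj_dist {A B : ℝ} {f : ℝ → ℝ} (hf : ContinuousOn f (Icc A B)) {u v : ℝ}
    (hu : u ∈ Icc A B) (hv : v ∈ Icc A B) {s : ℝ}
    (hmin : ∀ w ∈ Icc A B, |s - f u| ≤ |s - f w|) :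
    |f u - f v| ≤ |s - f v| := by
  have h1 : |s - f u| ≤ |s - f v| := hmin v hv
  have hsub : uIcc v u ⊆ Icc A B := by
    rw [uIcc_eq_union]
    exact union_subset (Icc_subset_Icc hv.1 hu.2) (Icc_subset_Icc hu.1 hv.2)
  rcases le_total s (f u) with hsu | hsu <;> rcases le_total s (f v) with hsv | hsv
  · -- s ≤ f u, s ≤ f v
    have e1 : |s - f u| = f u - s := by rw [abs_of_nonpos (by linarith)]; ring
    have e2 : |s - f v| = f v - s := by rw [abs_of_nonpos (by linarith)]; ring
    rw [e1, e2] at h1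
    rw [e2, abs_le]
    constructor <;> linarith
  · -- f v ≤ s ≤ f u : IVT case
    have hmem : s ∈ uIcc (f v) (f u) := by
      rw [mem_uIcc]; exact Or.inl ⟨hsv, hsu⟩
    obtain ⟨w, hw, hfw⟩ := intermediate_value_uIcc (hf.mono hsub) hmem
    have := hmin w (hsub hw)
    rw [hfw, sub_self, abs_zero] at this
    have hfu : f u = s := by
      have := abs_nonpos_iff.mp this
      linarith [sub_eq_zero.mp this]
    rw [hfu, abs_sub_comm]
  · -- f u ≤ s ≤ f v : IVT case
    have hmem : s ∈ uIcc (f v) (f u) := by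
      rw [mem_uIcc]; exact Or.inr ⟨hsu, hsv⟩
    obtain ⟨w, hw, hfw⟩ := intermediate_value_uIcc (hf.mono hsub) hmem
    have := hmin w (hsub hw)
    rw [hfw, sub_self, abs_zero] at this
    have hfu : f u = s := by
      have := abs_nonpos_iff.mp this
      linarith [sub_eq_zero.mp this]
    rw [hfu, abs_sub_comm]
  · -- f u ≤ s, f v ≤ s
    have e1 : |s - f u| = s - f u := abs_of_nonneg (by linarith)
    have e2 : |s - f v| = s - f v := abs_of_nonneg (by linarith)
    rw [e1, e2] at h1
    rw [e2, abs_le]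
    constructor <;> linarith

end AuxiliaryLemmas

open Set Real

/-- Part of Theorem 1: for any `n ≥ 1`, `ε ∈ (0,1)` and true parameter `φ ∈ Φ`,
the least squares estimate satisfies `P[|φ^LS_n − φ| > δ₁(x^n, ε)] ≤ ε`, where
`δ₁ = (1/|f′(φ^LS_n)|)·√((2/n)·V_max·ln(2/ε)) + (L/n)·V_max·ln(2/ε)`. -/
theorem exact_confidence_interval_delta_one
    {Ω : Type*} [MeasurableSpace Ω] (μ : Measure Ω) [IsProbabilityMeasure μ]
    -- the parameter range Φ = [φmin, φmax]
    (φmin φmax : ℝ) (hΦ : φmin < φmax)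
    -- f (the expectation as a function of the parameter) and its two derivatives on Φ
    (f f' f'' : ℝ → ℝ)
    (hf' : ∀ x ∈ Set.Icc φmin φmax, HasDerivWithinAt f (f' x) (Set.Icc φmin φmax) x)
    (hf'' : ∀ x ∈ Set.Icc φmin φmax, HasDerivWithinAt f' (f'' x) (Set.Icc φmin φmax) x)
    (hf''cont : ContinuousOn f'' (Set.Icc φmin φmax))
    (hinj : Set.InjOn f (Set.Icc φmin φmax))
    (hf'ne : ∀ x ∈ Set.Icc φmin φmax, f' x ≠ 0)
    -- L = max over Φ of |f′(φ′)⁻³ · f″(φ′)|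
    (L : ℝ)
    (hL : IsGreatest ((fun x => |(f' x)⁻¹ ^ 3 * f'' x|) '' Set.Icc φmin φmax) L)
    -- the data: n i.i.d. outcomes bounded in [a, b] with mean f φ
    (a b : ℝ) (hab : a < b)
    (n : ℕ) (hn : 1 ≤ n)
    (X : Fin n → Ω → ℝ)
    (hmeas : ∀ i, Measurable (X i))
    (hindep : iIndepFun X μ)
    (hident : ∀ i j, IdentDistrib (X i) (X j) μ μ)
    (hbound : ∀ i, ∀ᵐ ω ∂μ, X i ω ∈ Set.Icc a b)
    (φ : ℝ) (hφ : φ ∈ Set.Icc φmin φmax)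
    (hmean : ∀ i, ∫ ω, X i ω ∂μ = f φ)
    -- the sample mean and the least squares estimator
    (S : Ω → ℝ) (hS : ∀ ω, S ω = (∑ i, X i ω) / n)
    (φLS : Ω → ℝ)
    (hφLS : ∀ ω, φLS ω ∈ Set.Icc φmin φmax ∧
      ∀ φ' ∈ Set.Icc φmin φmax, |S ω - f (φLS ω)| ≤ |S ω - f φ'|)
    -- V_max and δ₁
    (Vmax : ℝ) (hVmax : Vmax = (b - a) ^ 2 / 4)
    (ε : ℝ) (hε : ε ∈ Set.Ioo (0 : ℝ) 1)
    (δ1 : Ω → ℝ)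
    (hδ1 : ∀ ω, δ1 ω =
      (1 / |f' (φLS ω)|) * Real.sqrt ((2 / n) * Vmax * Real.log (2 / ε))
        + (L / n) * Vmax * Real.log (2 / ε)) :
    μ {ω | δ1 ω < |φLS ω - φ|} ≤ ENNReal.ofReal ε := by
  obtain ⟨hε0, hε1⟩ := hε
  have hn0 : (0:ℝ) < n := by exact_mod_cast Nat.pos_of_ne_zero (by omega)
  have hba : (0:ℝ) < b - a := by linarith
  have hVpos : 0 < Vmax := by rw [hVmax]; positivity
  have hlog : 0 < Real.log (2/ε) := Real.log_pos (by rw [lt_div_iff₀ hε0]; linarith)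
  set t := Real.sqrt ((2 / (n:ℝ)) * Vmax * Real.log (2 / ε)) with ht
  have harg : 0 < (2 / (n:ℝ)) * Vmax * Real.log (2 / ε) := by positivity
  have ht2 : t ^ 2 = (2 / (n:ℝ)) * Vmax * Real.log (2 / ε) := Real.sq_sqrt harg.le
  have ht0 : 0 ≤ t := Real.sqrt_nonneg _
  have hLnn : 0 ≤ L := by
    obtain ⟨x, hx, hxe⟩ := hL.1
    rw [← hxe]; exact abs_nonneg _
  have hfLb : ∀ x ∈ Set.Icc φmin φmax, |f'' x| ≤ L * |f' x| ^ 3 := by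
    intro x hx
    have h1 := hL.2 ⟨x, hx, rfl⟩
    have h2 : f' x ≠ 0 := hf'ne x hx
    have h3 : |f'' x| = |f' x| ^ 3 * |(f' x)⁻¹ ^ 3 * f'' x| := by
      rw [abs_mul, abs_pow, abs_inv, ← mul_assoc,
        show |f' x| ^ 3 * |f' x|⁻¹ ^ 3 = 1 from by
          rw [← mul_pow, mul_inv_cancel₀ (abs_ne_zero.mpr h2), one_pow],
        one_mul]
    rw [h3, mul_comm]
    exact mul_le_mul_of_nonneg_right h1 (by positivity)
  have hfc : ContinuousOn f (Set.Icc φmin φmax) := fun y hy => (hf' y hy).continuousWithinAt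
  -- deterministic part: the bad event is contained in the Hoeffding event
  have hincl : {ω | δ1 ω < |φLS ω - φ|} ⊆ {ω | t < |S ω - f φ|} := by
    intro ω hω
    simp only [mem_setOf_eq] at hω ⊢
    by_contra hc
    push_neg at hc
    obtain ⟨hLSmem, hLSmin⟩ := hφLS ω
    have hd : |f (φLS ω) - f φ| ≤ t := (proj_dist hfc hLSmem hφ hLSmin).trans hc
    have hd' : |f φ - f (φLS ω)| ≤ t := by rwa [abs_sub_comm]
    have htay := key_taylor (le_of_lt hΦ) hf' hf'' hf'ne hfLb hLSmem hφ
    have h0 : (0:ℝ) < |f' (φLS ω)| := abs_pos.mpr (hf'ne _ hLSmem)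
    have hsq : (f φ - f (φLS ω)) ^ 2 ≤ t ^ 2 := by
      rw [← sq_abs]
      exact pow_le_pow_left₀ (abs_nonneg _) hd' 2
    have hchain : |φ - φLS ω| ≤ δ1 ω := by
      rw [hδ1 ω]
      calc |φ - φLS ω| ≤ |f φ - f (φLS ω)| / |f' (φLS ω)|
          + L / 2 * (f φ - f (φLS ω)) ^ 2 := htay
      _ ≤ t / |f' (φLS ω)| + L / 2 * t ^ 2 :=
          add_le_add (by gcongr) (mul_le_mul_of_nonneg_left hsq (by linarith))
      _ = 1 / |f' (φLS ω)| * t + L / n * Vmax * Real.log (2/ε) := by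
          rw [ht2]; ring
    rw [abs_sub_comm] at hchain
    linarith
  -- probabilistic part
  have hXint : ∀ i, Integrable (X i) μ :=
    fun i => integrable_of_mem_Icc (hmeas i).aestronglyMeasurable (hbound i)
  set Y : Fin n → Ω → ℝ := fun i ω => X i ω - f φ with hY
  set Z : Fin n → Ω → ℝ := fun i ω => f φ - X i ω with hZ
  have hYmeas : ∀ i, Measurable (Y i) := fun i => (hmeas i).sub_const _
  have hZmeas : ∀ i, Measurable (Z i) := fun i => measurable_const.sub (hmeas i)
  have hYindep : iIndepFun Y μ :=
    hindep.comp (fun _ x => x - f φ) (fun _ => measurable_id.sub_const _)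
  have hZindep : iIndepFun Z μ :=
    hindep.comp (fun _ x => f φ - x) (fun _ => measurable_const.sub measurable_id)
  have hYb : ∀ i, ∀ᵐ ω ∂μ, Y i ω ∈ Icc (a - f φ) (b - f φ) := fun i => by
    filter_upwards [hbound i] with ω hω
    exact ⟨by simp [hY]; linarith [hω.1], by simp [hY]; linarith [hω.2]⟩
  have hZb : ∀ i, ∀ᵐ ω ∂μ, Z i ω ∈ Icc (f φ - b) (f φ - a) := fun i => by
    filter_upwards [hbound i] with ω hω
    exact ⟨by simp [hZ]; linarith [hω.2], by simp [hZ]; linarith [hω.1]⟩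
  have hYmean : ∀ i, ∫ ω, Y i ω ∂μ = 0 := fun i => by
    rw [hY]
    simp only
    rw [integral_sub (hXint i) (integrable_const _), hmean i, integral_const]
    simp
  have hZmean : ∀ i, ∫ ω, Z i ω ∂μ = 0 := fun i => by
    rw [hZ]
    simp only
    rw [integral_sub (integrable_const _) (hXint i), hmean i, integral_const]
    simp
  have hup := hoeffding_sum hYmeas hYindep (show a - f φ < b - f φ by linarith) hYb hYmean ht0
  have hlo := hoeffding_sum hZmeas hZindep (show f φ - b < f φ - a by linarith) hZb hZmean ht0
  rw [show b - f φ - (a - f φ) = b - a by ring] at hup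
  rw [show f φ - a - (f φ - b) = b - a by ring] at hlo
  have hexp : exp (-2 * n * t ^ 2 / (b - a) ^ 2) = ε / 2 := by
    rw [ht2, hVmax]
    rw [show -2 * (n:ℝ) * (2 / n * ((b - a) ^ 2 / 4) * Real.log (2/ε)) / (b - a) ^ 2
        = -Real.log (2/ε) from by field_simp; ring]
    rw [exp_neg, exp_log (by positivity), inv_div]
  rw [hexp] at hup hlo
  -- event splitting
  have hsplit : {ω | t < |S ω - f φ|} ⊆
      {ω | (n:ℝ) * t ≤ ∑ i, Y i ω} ∪ {ω | (n:ℝ) * t ≤ ∑ i, Z i ω} := by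
    intro ω hω
    simp only [mem_setOf_eq, mem_union] at hω ⊢
    have hsum : ∑ i, Y i ω = (n:ℝ) * (S ω - f φ) := by
      simp only [hY]
      rw [Finset.sum_sub_distrib, Finset.sum_const, Finset.card_univ, Fintype.card_fin, hS ω]
      field_simp
      rw [nsmul_eq_mul]
    have hsumZ : ∑ i, Z i ω = -∑ i, Y i ω := by
      simp only [hY, hZ, ← Finset.sum_neg_distrib, neg_sub]
    have habs : (n:ℝ) * t ≤ |∑ i, Y i ω| := by
      rw [hsum, abs_mul, abs_of_nonneg hn0.le]
      exact mul_le_mul_of_nonneg_left hω.le hn0.le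
    rcases abs_cases (∑ i, Y i ω) with ⟨he, _⟩ | ⟨he, _⟩
    · left; rwa [he] at habs
    · right; rw [hsumZ]; rwa [he] at habs
  calc μ {ω | δ1 ω < |φLS ω - φ|}
      ≤ μ ({ω | (n:ℝ) * t ≤ ∑ i, Y i ω} ∪ {ω | (n:ℝ) * t ≤ ∑ i, Z i ω}) :=
        measure_mono (hincl.trans hsplit)
  _ ≤ μ {ω | (n:ℝ) * t ≤ ∑ i, Y i ω} + μ {ω | (n:ℝ) * t ≤ ∑ i, Z i ω} := measure_union_le _ _
  _ ≤ ENNReal.ofReal (ε / 2) + ENNReal.ofReal (ε / 2) := add_le_add hup hlo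
  _ = ENNReal.ofReal ε := by
      rw [← ENNReal.ofReal_add (by positivity) (by positivity)]
      norm_num
end

section
/- (Relation to the linearized uncertainty, Eq. (20).) For any fixed ε ∈ (0,1) and true parameter φ in the interior relevant range, limsup_{n→∞} √n · E[δ(x^n, ε)] ≤ B_LU · √(2 ln(4/ε)), where B_LU = √(Var(X₁)) / |f′(φ)| is the coefficient of the linearized uncertainty and the expectation is over the data x^n = (X₁,…,Xₙ). -/
open MeasureTheory ProbabilityTheory Filter Topology

open Set in
lemma exists_proj_inverse {p q : ℝ} (hpq : p ≤ q) (h : ℝ → ℝ)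
    (hc : ContinuousOn h (Icc p q)) (hm : StrictMonoOn h (Icc p q)) :
    ∃ G : ℝ → ℝ, Monotone G ∧ (∀ r, G r ∈ Icc p q) ∧
      (∀ x ∈ Icc p q, G (h x) = x) ∧
      (∀ r x, x ∈ Icc p q → (∀ y ∈ Icc p q, |r - h x| ≤ |r - h y|) → x = G r) := by
  have hpI : p ∈ Icc p q := left_mem_Icc.2 hpq
  have hqI : q ∈ Icc p q := right_mem_Icc.2 hpq
  have hpq' : h p ≤ h q := hm.monotoneOn hpI hqI hpq
  set A : ℝ → Set ℝ := fun r => insert p {x ∈ Icc p q | h x ≤ r} with hA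
  have hne : ∀ r, (A r).Nonempty := fun r => ⟨p, mem_insert _ _⟩
  have hbdd : ∀ r, BddAbove (A r) := by
    intro r
    refine ⟨q, ?_⟩
    rintro x (rfl | ⟨hx, _⟩)
    · exact hpq
    · exact hx.2
  have hmono : Monotone fun r => sSup (A r) := by
    intro r s hrs
    refine csSup_le_csSup (hbdd s) (hne r) ?_
    rintro x (rfl | ⟨hx, hle⟩)
    · exact mem_insert _ _
    · exact Or.inr ⟨hx, hle.trans hrs⟩
  have hmem : ∀ r, sSup (A r) ∈ Icc p q := by
    intro r
    constructor
    · exact le_csSup (hbdd r) (mem_insert _ _)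
    · refine csSup_le (hne r) ?_
      rintro x (rfl | ⟨hx, _⟩)
      · exact hpq
      · exact hx.2
  have hfix : ∀ x ∈ Icc p q, sSup (A (h x)) = x := by
    intro x hx
    have : A (h x) = Icc p x := by
      ext y
      constructor
      · rintro (rfl | ⟨hy, hle⟩)
        · exact ⟨le_refl _, hx.1⟩
        · refine ⟨hy.1, ?_⟩
          by_contra hcon
          push_neg at hcon
          exact absurd (hm hx hy hcon) (not_lt.2 hle)
      · intro hy
        rcases eq_or_lt_of_le hy.1 with rfl | hpy
        · exact Or.inl rfl
        · exact Or.inr ⟨⟨hy.1, hy.2.trans hx.2⟩,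
            hm.monotoneOn ⟨hy.1, hy.2.trans hx.2⟩ hx hy.2⟩
    rw [this, csSup_Icc hx.1]
  refine ⟨fun r => sSup (A r), hmono, hmem, hfix, ?_⟩
  intro r x hx hmin
  set t : ℝ := max (h p) (min r (h q)) with ht
  have htmem : t ∈ Icc (h p) (h q) := ⟨le_max_left _ _, max_le hpq' (min_le_right _ _)⟩
  obtain ⟨z, hz, hzt⟩ := intermediate_value_Icc hpq hc htmem
  -- nearest point property of t
  have key : ∀ u, h p ≤ u → u ≤ h q → |r - t| ≤ |r - u| ∧ (|r - u| ≤ |r - t| → u = t) := by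
    intro u h1 h2
    rcases le_total r (h p) with hr | hr
    · have ht' : t = h p := by
        rw [ht, min_eq_left (hr.trans hpq'), max_eq_left hr]
      rw [ht', abs_of_nonpos (by linarith : r - h p ≤ 0),
        abs_of_nonpos (by linarith : r - u ≤ 0)]
      constructor
      · linarith
      · intro hle; linarith
    rcases le_total (h q) r with hr2 | hr2
    · have ht' : t = h q := by
        rw [ht, min_eq_right hr2, max_eq_right hpq']
      rw [ht', abs_of_nonneg (by linarith : 0 ≤ r - h q),
        abs_of_nonneg (by linarith : 0 ≤ r - u)]
      constructor
      · linarith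
      · intro hle; linarith
    · have ht' : t = r := by
        rw [ht, min_eq_left hr2, max_eq_right hr]
      rw [ht', sub_self, abs_zero]
      refine ⟨abs_nonneg _, fun hle => ?_⟩
      have := abs_nonneg (r - u)
      have h0 : |r - u| = 0 := le_antisymm hle this
      have := abs_eq_zero.1 h0
      linarith
  -- x = z
  have hhx : h x ∈ Icc (h p) (h q) :=
    ⟨hm.monotoneOn hpI hx hx.1, hm.monotoneOn hx hqI hx.2⟩
  have hxz : x = z := by
    have h1 : |r - h x| ≤ |r - t| := by
      have := hmin z hz
      rwa [hzt] at this
    have h2 : h x = t := (key (h x) hhx.1 hhx.2).2 h1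
    exact hm.injOn hx hz (by rw [h2, hzt])
  -- z is the greatest element of A r
  have hgreat : IsGreatest (A r) z := by
    constructor
    · rcases le_or_gt (h z) r with h' | h'
      · exact Or.inr ⟨hz, h'⟩
      · have ht' : t = h p := by
          rcases le_total (h p) (min r (h q)) with h'' | h''
          · exfalso
            have : t = min r (h q) := max_eq_right h''
            have : t ≤ r := this ▸ min_le_left _ _
            rw [hzt] at h'
            linarith
          · exact max_eq_left h''
        have : z = p := hm.injOn hz hpI (by rw [hzt, ht'])
        exact this ▸ mem_insert _ _
    · rintro y (rfl | ⟨hy, hyr⟩)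
      · exact hz.1
      · by_contra hcon
        push_neg at hcon
        have hylt : h z < h y := hm hz hy hcon
        have : h y ≤ t := by
          refine le_max_of_le_right (le_min hyr ?_)
          exact hm.monotoneOn hy hqI hy.2
        rw [hzt] at hylt
        linarith
  rw [hxz]; exact (hgreat.csSup_eq).symm

lemma monotone_continuousAt_of_fix {G h : ℝ → ℝ} {p q x : ℝ} (hG : Monotone G)
    (hfix : ∀ y ∈ Set.Icc p q, G (h y) = y) (hm : StrictMonoOn h (Set.Icc p q))
    (hx : x ∈ Set.Ioo p q) : ContinuousAt G (h x) := by
  rw [Metric.continuousAt_iff]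
  intro ε hε
  set η := min (ε / 2) (min ((x - p) / 2) ((q - x) / 2)) with hη
  have hxp : p < x := hx.1
  have hxq : x < q := hx.2
  have hη0 : 0 < η := by
    refine lt_min (by linarith) (lt_min (by linarith) (by linarith))
  have hη1 : η ≤ ε / 2 := min_le_left _ _
  have hη2 : η ≤ (x - p) / 2 := (min_le_right _ _).trans (min_le_left _ _)
  have hη3 : η ≤ (q - x) / 2 := (min_le_right _ _).trans (min_le_right _ _)
  have hxmI : x - η ∈ Set.Icc p q := ⟨by linarith, by linarith⟩
  have hxpI : x + η ∈ Set.Icc p q := ⟨by linarith, by linarith⟩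
  have hxI : x ∈ Set.Icc p q := ⟨hxp.le, hxq.le⟩
  have h1 : h (x - η) < h x := hm hxmI hxI (by linarith)
  have h2 : h x < h (x + η) := hm hxI hxpI (by linarith)
  refine ⟨min (h x - h (x - η)) (h (x + η) - h x),
    lt_min (by linarith) (by linarith), ?_⟩
  intro r hr
  rw [Real.dist_eq] at hr ⊢
  have hr' := abs_lt.1 hr
  have hmin1 : min (h x - h (x - η)) (h (x + η) - h x) ≤ h x - h (x - η) := min_le_left _ _
  have hmin2 : min (h x - h (x - η)) (h (x + η) - h x) ≤ h (x + η) - h x := min_le_right _ _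
  have hl : h (x - η) ≤ r := by linarith [hr'.1]
  have hu : r ≤ h (x + η) := by linarith [hr'.2]
  have hGl := hG hl
  have hGu := hG hu
  rw [hfix _ hxmI] at hGl
  rw [hfix _ hxpI] at hGu
  rw [hfix _ hxI]
  rw [abs_lt]
  constructor <;> linarith

set_option maxHeartbeats 1000000 in
/-- **Relation to the linearized uncertainty** (Eq. (20)): for fixed `ε ∈ (0,1)`
and true parameter `φ` in the interior of `Φ`,
`limsup_{n→∞} √n · E[δ(x^n, ε)] ≤ B_LU · √(2 ln(4/ε))`, where
`B_LU = √(Var(X₁)) / |f′(φ)|`. -/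
theorem limsup_sqrt_n_expectation_delta_le_LU
    {Ω : Type*} [MeasurableSpace Ω] (μ : Measure Ω) [IsProbabilityMeasure μ]
    (φmin φmax : ℝ) (hΦ : φmin < φmax)
    (f f' f'' : ℝ → ℝ)
    (hf' : ∀ x ∈ Set.Icc φmin φmax, HasDerivWithinAt f (f' x) (Set.Icc φmin φmax) x)
    (hf'' : ∀ x ∈ Set.Icc φmin φmax, HasDerivWithinAt f' (f'' x) (Set.Icc φmin φmax) x)
    (hf''cont : ContinuousOn f'' (Set.Icc φmin φmax))
    (hinj : Set.InjOn f (Set.Icc φmin φmax))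
    (hf'ne : ∀ x ∈ Set.Icc φmin φmax, f' x ≠ 0)
    (L : ℝ)
    (hL : IsGreatest ((fun x => |(f' x)⁻¹ ^ 3 * f'' x|) '' Set.Icc φmin φmax) L)
    (a b : ℝ) (hab : a < b)
    (X : ℕ → Ω → ℝ)
    (hmeas : ∀ i, Measurable (X i))
    (hindep : iIndepFun X μ)
    (hident : ∀ i j, IdentDistrib (X i) (X j) μ μ)
    (hbound : ∀ i, ∀ᵐ ω ∂μ, X i ω ∈ Set.Icc a b)
    (φ : ℝ) (hφ : φ ∈ Set.Ioo φmin φmax)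
    (hmean : ∀ i, ∫ ω, X i ω ∂μ = f φ)
    (S : ℕ → Ω → ℝ)
    (hS : ∀ n ω, S n ω = (∑ i ∈ Finset.range n, X i ω) / n)
    (φLS : ℕ → Ω → ℝ)
    (hφLS : ∀ n ω, φLS n ω ∈ Set.Icc φmin φmax ∧
      ∀ φ' ∈ Set.Icc φmin φmax, |S n ω - f (φLS n ω)| ≤ |S n ω - f φ'|)
    (V : ℕ → Ω → ℝ)
    (hV : ∀ n ω, V n ω = (∑ i ∈ Finset.range n, (X i ω - S n ω) ^ 2) / ((n : ℝ) - 1))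
    (Vmax : ℝ) (hVmax : Vmax = (b - a) ^ 2 / 4)
    (ε : ℝ) (hε : ε ∈ Set.Ioo (0 : ℝ) 1)
    (δ1 δ2 δ : ℕ → Ω → ℝ)
    (hδ1 : ∀ n ω, δ1 n ω =
      (1 / |f' (φLS n ω)|) * Real.sqrt ((2 / n) * Vmax * Real.log (2 / ε))
        + (L / n) * Vmax * Real.log (2 / ε))
    (hδ2 : ∀ n ω, δ2 n ω =
      (1 / |f' (φLS n ω)|) *
          (Real.sqrt ((2 / n) * V n ω * Real.log (4 / ε))
            + (8 * (b - a) / (3 * ((n : ℝ) - 1))) * Real.log (4 / ε))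
        + (L / 2) *
          (Real.sqrt ((2 / n) * V n ω * Real.log (4 / ε))
            + (8 * (b - a) / (3 * ((n : ℝ) - 1))) * Real.log (4 / ε)) ^ 2)
    (hδ : ∀ n ω, δ n ω = if n = 1 then δ1 n ω else min (δ1 n ω) (δ2 n ω)) :
    limsup (fun n : ℕ => Real.sqrt n * ∫ ω, δ n ω ∂μ) atTop ≤
      (Real.sqrt (variance (X 0) μ) / |f' φ|) * Real.sqrt (2 * Real.log (4 / ε)) := by
  set I := Set.Icc φmin φmax with hI
  have hφI : φ ∈ I := Set.mem_Icc_of_Ioo hφ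
  have hfc : ContinuousOn f I := fun x hx => (hf' x hx).continuousWithinAt
  have hf'c : ContinuousOn f' I := fun x hx => (hf'' x hx).continuousWithinAt
  set l2 := Real.log (2 / ε) with hl2def
  set l4 := Real.log (4 / ε) with hl4def
  have hε0 : 0 < ε := hε.1
  have hε1 : ε < 1 := hε.2
  have hl2 : 0 ≤ l2 := Real.log_nonneg (by rw [le_div_iff₀ hε0]; linarith)
  have hl4 : 0 ≤ l4 := Real.log_nonneg (by rw [le_div_iff₀ hε0]; linarith)
  have hVmax0 : 0 ≤ Vmax := by rw [hVmax]; positivity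
  have hL0 : 0 ≤ L := by
    obtain ⟨x0, -, hx0⟩ := hL.1
    exact hx0 ▸ abs_nonneg _
  have hf'φ : f' φ ≠ 0 := hf'ne φ hφI
  have habsφ : 0 < |f' φ| := abs_pos.2 hf'φ
  -- the inverse/projection function H
  obtain ⟨H, hHmeas, hHcont, hHφ, hHmem, hHLS⟩ :
      ∃ H : ℝ → ℝ, Measurable H ∧ ContinuousAt H (f φ) ∧ H (f φ) = φ ∧
        (∀ r, H r ∈ I) ∧ ∀ n ω, φLS n ω = H (S n ω) := by
    rcases ContinuousOn.strictMonoOn_of_injOn_Icc' hΦ.le hfc hinj with hmono | hanti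
    · obtain ⟨G, hGmono, hGmem, hGfix, hGproj⟩ := exists_proj_inverse hΦ.le f hfc hmono
      exact ⟨G, hGmono.measurable, monotone_continuousAt_of_fix hGmono hGfix hmono hφ,
        hGfix φ hφI, hGmem,
        fun n ω => hGproj (S n ω) (φLS n ω) (hφLS n ω).1 (hφLS n ω).2⟩
    · have hgc : ContinuousOn (fun x => -(f x)) I := hfc.neg
      have hgm : StrictMonoOn (fun x => -(f x)) I :=
        fun x hx y hy hxy => neg_lt_neg (hanti hx hy hxy)
      obtain ⟨G, hGmono, hGmem, hGfix, hGproj⟩ := exists_proj_inverse hΦ.le _ hgc hgm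
      refine ⟨fun r => G (-r), hGmono.measurable.comp measurable_neg, ?_, hGfix φ hφI,
        fun r => hGmem (-r), ?_⟩
      · exact (monotone_continuousAt_of_fix hGmono hGfix hgm hφ).comp
          continuous_neg.continuousAt
      · intro n ω
        refine hGproj (-(S n ω)) (φLS n ω) (hφLS n ω).1 ?_
        intro y hy
        have h0 := (hφLS n ω).2 y hy
        have e1 : -S n ω - -f (φLS n ω) = -(S n ω - f (φLS n ω)) := by ring
        have e2 : -S n ω - -f y = -(S n ω - f y) := by ring
        calc |-S n ω - -f (φLS n ω)| = |S n ω - f (φLS n ω)| := by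
              rw [e1, abs_neg]
          _ ≤ |S n ω - f y| := h0
          _ = |-S n ω - -f y| := by rw [e2, abs_neg]
  -- clamped version of f'
  set cl : ℝ → ℝ := fun x => max φmin (min x φmax) with hcl
  have hclcont : Continuous cl := continuous_const.max (continuous_id.min continuous_const)
  have hclmem : ∀ x, cl x ∈ I := fun x => ⟨le_max_left _ _, max_le hΦ.le (min_le_right _ _)⟩
  have hclid : ∀ x ∈ I, cl x = x := by
    intro x hx
    simp only [hcl, min_eq_left hx.2, max_eq_right hx.1]
  set F' : ℝ → ℝ := fun x => f' (cl x) with hF'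
  have hF'cont : Continuous F' := hf'c.comp_continuous hclcont hclmem
  have hF'eq : ∀ x ∈ I, F' x = f' x := fun x hx => by simp only [hF', hclid x hx]
  -- minimum of |f'| on I
  obtain ⟨xm, hxmI, hxmmin'⟩ := IsCompact.exists_isMinOn isCompact_Icc
    ⟨φmin, Set.left_mem_Icc.2 hΦ.le⟩ hf'c.abs
  set m := |f' xm| with hm
  have hm0 : 0 < m := abs_pos.2 (hf'ne xm hxmI)
  have hmle : ∀ x ∈ I, m ≤ |f' x| := fun x hx => hxmmin' hx
  -- measurability
  have hSmeas : ∀ n, Measurable (S n) := by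
    intro n
    have he : S n = fun ω => (∑ i ∈ Finset.range n, X i ω) / (n : ℝ) := funext fun ω => hS n ω
    rw [he]
    exact (Finset.measurable_sum _ fun i _ => hmeas i).div_const _
  have hφLSmeas : ∀ n, Measurable (φLS n) := by
    intro n
    have he : φLS n = fun ω => H (S n ω) := funext fun ω => hHLS n ω
    rw [he]; exact hHmeas.comp (hSmeas n)
  have hVmeas : ∀ n, Measurable (V n) := by
    intro n
    have he : V n = fun ω => (∑ i ∈ Finset.range n, (X i ω - S n ω) ^ 2) / ((n:ℝ) - 1) :=
      funext fun ω => hV n ω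
    rw [he]
    exact (Finset.measurable_sum _ fun i _ => ((hmeas i).sub (hSmeas n)).pow_const 2).div_const _
  set A : ℕ → Ω → ℝ := fun n ω =>
    Real.sqrt ((2/(n:ℝ)) * V n ω * l4) + (8*(b-a)/(3*((n:ℝ)-1))) * l4 with hAdef
  have hδ1A : ∀ n ω, δ1 n ω =
      (1 / |f' (φLS n ω)|) * Real.sqrt ((2/(n:ℝ)) * Vmax * l2) + (L/(n:ℝ)) * Vmax * l2 :=
    fun n ω => by rw [hδ1 n ω]
  have hδ2A : ∀ n ω, δ2 n ω =
      (1 / |f' (φLS n ω)|) * A n ω + (L/2) * (A n ω) ^ 2 := by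
    intro n ω
    simp only [hAdef]
    rw [hδ2 n ω]
  have htmeas : ∀ n, Measurable fun ω => |F' (φLS n ω)| :=
    fun n => (hF'cont.measurable.comp (hφLSmeas n)).abs
  have hf'invmeas : ∀ n, Measurable fun ω => 1 / |f' (φLS n ω)| := by
    intro n
    have he : (fun ω => 1 / |f' (φLS n ω)|) = fun ω => 1 / |F' (φLS n ω)| :=
      funext fun ω => by rw [hF'eq _ (hφLS n ω).1]
    rw [he]
    simp only [one_div]
    exact (htmeas n).inv
  have hAmeas : ∀ n, Measurable (A n) := by
    intro n
    simp only [hAdef]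
    exact (Real.continuous_sqrt.measurable.comp
      (((hVmeas n).const_mul _).mul_const _)).add_const _
  have hδ1meas : ∀ n, Measurable (δ1 n) := by
    intro n
    have he : δ1 n = fun ω =>
        (1 / |f' (φLS n ω)|) * Real.sqrt ((2/(n:ℝ)) * Vmax * l2) + (L/(n:ℝ)) * Vmax * l2 :=
      funext fun ω => hδ1A n ω
    rw [he]
    exact (((hf'invmeas n).mul_const _).add_const _)
  have hδ2meas : ∀ n, Measurable (δ2 n) := by
    intro n
    have he : δ2 n = fun ω => (1 / |f' (φLS n ω)|) * A n ω + (L/2) * (A n ω) ^ 2 :=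
      funext fun ω => hδ2A n ω
    rw [he]
    exact ((hf'invmeas n).mul (hAmeas n)).add (((hAmeas n).pow_const 2).const_mul _)
  have hδmeas : ∀ n, Measurable (δ n) := by
    intro n
    have he : δ n = fun ω => if n = 1 then δ1 n ω else min (δ1 n ω) (δ2 n ω) :=
      funext fun ω => hδ n ω
    rw [he]
    split_ifs
    exacts [hδ1meas n, (hδ1meas n).min (hδ2meas n)]
  -- integrability
  set M := max |a| |b| with hM
  have habsX : ∀ i, ∀ᵐ ω ∂μ, ‖X i ω‖ ≤ M := by
    intro i
    filter_upwards [hbound i] with ω hω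
    rw [Real.norm_eq_abs, abs_le]
    constructor
    · have h1 := neg_abs_le a
      have h2 := le_max_left |a| |b|
      linarith [hω.1]
    · have h1 := le_abs_self b
      have h2 := le_max_right |a| |b|
      linarith [hω.2]
  have hmemtop : ∀ i, MemLp (X i) ⊤ μ := fun i =>
    memLp_top_of_bound (hmeas i).aestronglyMeasurable M (habsX i)
  have hint : ∀ i, Integrable (X i) μ := fun i => (hmemtop i).integrable le_top
  -- strong laws of large numbers
  have hpair : Pairwise (Function.onFun (IndepFun · · μ) X) := fun i j hij => hindep.indepFun hij
  have hslln1 : ∀ᵐ ω ∂μ,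
      Tendsto (fun n : ℕ => (∑ i ∈ Finset.range n, X i ω) / n) atTop (𝓝 (f φ)) := by
    have h0 := strong_law_ae_real X (hint 0) hpair (fun i => hident i 0)
    rwa [show μ[X 0] = f φ from hmean 0] at h0
  have hsqmeas : Measurable fun x : ℝ => x ^ 2 := measurable_id.pow_const 2
  have hYint : Integrable (fun ω => X 0 ω ^ 2) μ := by
    refine (memLp_top_of_bound ((hmeas 0).pow_const 2).aestronglyMeasurable (M^2)
      ?_).integrable le_top
    filter_upwards [habsX 0] with ω hω
    calc ‖X 0 ω ^ 2‖ = ‖X 0 ω‖ ^ 2 := by rw [norm_pow]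
      _ ≤ M ^ 2 := pow_le_pow_left₀ (norm_nonneg _) hω 2
  set E2 := ∫ ω, X 0 ω ^ 2 ∂μ with hE2
  have hslln2 : ∀ᵐ ω ∂μ,
      Tendsto (fun n : ℕ => (∑ i ∈ Finset.range n, X i ω ^ 2) / n) atTop (𝓝 E2) := by
    have h0 := strong_law_ae_real (fun i ω => X i ω ^ 2) hYint
      (fun i j hij => (hindep.indepFun hij).comp hsqmeas hsqmeas)
      (fun i => (hident i 0).comp hsqmeas)
    exact h0
  -- variance identity
  set Var := variance (X 0) μ with hVar
  have hvar0 : 0 ≤ Var := variance_nonneg _ _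
  have hvarE : Var = E2 - (f φ) ^ 2 := by
    rw [hVar, variance_eq_sub ((hmemtop 0).mono_exponent le_top), hmean 0]
    congr 1
  -- limit ratio facts
  have hn1tend : Tendsto (fun n : ℕ => ((n:ℝ) - 1)) atTop atTop := by
    simpa [sub_eq_add_neg] using
      tendsto_atTop_add_const_right atTop (-1 : ℝ) tendsto_natCast_atTop_atTop
  have hinvn1 : Tendsto (fun n : ℕ => ((n:ℝ) - 1)⁻¹) atTop (𝓝 0) := hn1tend.inv_tendsto_atTop
  have hratio : Tendsto (fun n : ℕ => (n:ℝ) / ((n:ℝ) - 1)) atTop (𝓝 1) := by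
    have h1 : (fun n : ℕ => (1:ℝ) + ((n:ℝ)-1)⁻¹) =ᶠ[atTop] fun n : ℕ => (n:ℝ)/((n:ℝ)-1) := by
      filter_upwards [eventually_ge_atTop 2] with n hn
      have hn2 : (2:ℝ) ≤ (n:ℝ) := by exact_mod_cast hn
      have hne : ((n:ℝ) - 1) ≠ 0 := by linarith
      field_simp
      ring
    have h2 := (tendsto_const_nhds : Tendsto (fun _ : ℕ => (1:ℝ)) atTop (𝓝 1)).add hinvn1
    rw [add_zero] at h2
    exact h2.congr' h1
  have hinvsqrt : Tendsto (fun n : ℕ => (Real.sqrt n)⁻¹) atTop (𝓝 0) := by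
    have h1 : (fun n : ℕ => (Real.sqrt n)⁻¹) = fun n : ℕ => Real.sqrt ((n:ℝ)⁻¹) := by
      funext n; rw [Real.sqrt_inv]
    rw [h1]
    have h2 : Tendsto (fun n : ℕ => ((n:ℝ))⁻¹) atTop (𝓝 0) := by
      simpa [one_div] using tendsto_inv_atTop_nhds_zero_nat
    simpa using h2.sqrt
  have hsqrtratio : Tendsto (fun n : ℕ => Real.sqrt n / ((n:ℝ) - 1)) atTop (𝓝 0) := by
    have h1 : (fun n : ℕ => (Real.sqrt n)⁻¹ * ((n:ℝ)/((n:ℝ)-1))) =ᶠ[atTop]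
        fun n : ℕ => Real.sqrt n / ((n:ℝ) - 1) := by
      filter_upwards [eventually_ge_atTop 2] with n hn
      have hn2 : (2:ℝ) ≤ (n:ℝ) := by exact_mod_cast hn
      have hne : ((n:ℝ) - 1) ≠ 0 := by linarith
      have hs0 : Real.sqrt n ≠ 0 := Real.sqrt_ne_zero'.2 (by linarith)
      have hss : Real.sqrt n * Real.sqrt n = (n:ℝ) :=
        Real.mul_self_sqrt (Nat.cast_nonneg n)
      have e2 : (Real.sqrt n)⁻¹ * (n:ℝ) = Real.sqrt n := by
        nth_rewrite 2 [← hss]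
        rw [← mul_assoc, inv_mul_cancel₀ hs0, one_mul]
      calc (Real.sqrt n)⁻¹ * ((n:ℝ)/((n:ℝ)-1))
          = ((Real.sqrt n)⁻¹ * (n:ℝ))/((n:ℝ)-1) := by ring
        _ = Real.sqrt n / ((n:ℝ)-1) := by rw [e2]
    have h2 := hinvsqrt.mul hratio
    rw [zero_mul] at h2
    exact h2.congr' h1
  -- uniform bound
  set C := (1/m) * Real.sqrt (2*Vmax*l2) + L*Vmax*l2 with hC
  have hC0 : 0 ≤ C := by
    have h1 : 0 ≤ (1/m) * Real.sqrt (2*Vmax*l2) :=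
      mul_nonneg (one_div_nonneg.2 hm0.le) (Real.sqrt_nonneg _)
    have h2 : 0 ≤ L*Vmax*l2 := mul_nonneg (mul_nonneg hL0 hVmax0) hl2
    rw [hC]
    linarith
  have hδ1nonneg : ∀ n ω, 0 ≤ δ1 n ω := by
    intro n ω
    rw [hδ1A n ω]
    have h1 : 0 ≤ 1 / |f' (φLS n ω)| := one_div_nonneg.2 (abs_nonneg _)
    have h2 : (0:ℝ) ≤ L / n := div_nonneg hL0 (Nat.cast_nonneg n)
    exact add_nonneg (mul_nonneg h1 (Real.sqrt_nonneg _))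
      (mul_nonneg (mul_nonneg h2 hVmax0) hl2)
  have hAnonneg : ∀ n ω, 2 ≤ n → 0 ≤ A n ω := by
    intro n ω hn
    simp only [hAdef]
    have hn2 : (2:ℝ) ≤ (n:ℝ) := by exact_mod_cast hn
    have h3 : 0 ≤ 8*(b-a)/(3*((n:ℝ)-1)) :=
      div_nonneg (by linarith) (by linarith)
    exact add_nonneg (Real.sqrt_nonneg _) (mul_nonneg h3 hl4)
  have hδ2nonneg : ∀ n ω, 2 ≤ n → 0 ≤ δ2 n ω := by
    intro n ω hn
    rw [hδ2A n ω]
    have h1 : 0 ≤ 1 / |f' (φLS n ω)| := one_div_nonneg.2 (abs_nonneg _)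
    exact add_nonneg (mul_nonneg h1 (hAnonneg n ω hn))
      (mul_nonneg (by linarith) (sq_nonneg _))
  have hFbound : ∀ (n : ℕ) ω, ‖Real.sqrt n * δ n ω‖ ≤ C := by
    intro n ω
    rcases Nat.eq_zero_or_pos n with rfl | hn
    · simpa using hC0
    · have hn1 : 1 ≤ (n:ℝ) := by exact_mod_cast hn
      have hn0 : (0:ℝ) < n := by linarith
      have hδnn : 0 ≤ δ n ω := by
        rw [hδ n ω]
        split_ifs with h
        · exact hδ1nonneg n ω
        · exact le_min (hδ1nonneg n ω) (hδ2nonneg n ω (by omega))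
      have hδle : δ n ω ≤ δ1 n ω := by
        rw [hδ n ω]; split_ifs
        · exact le_refl _
        · exact min_le_left _ _
      rw [Real.norm_eq_abs, abs_of_nonneg (mul_nonneg (Real.sqrt_nonneg _) hδnn)]
      refine (mul_le_mul_of_nonneg_left hδle (Real.sqrt_nonneg _)).trans ?_
      rw [hδ1A n ω]
      have e1 : Real.sqrt n * Real.sqrt ((2/(n:ℝ)) * Vmax * l2) = Real.sqrt (2*Vmax*l2) := by
        rw [← Real.sqrt_mul (Nat.cast_nonneg n)]
        congr 1
        field_simp
      have hb1 : 1 / |f' (φLS n ω)| ≤ 1 / m :=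
        one_div_le_one_div_of_le hm0 (hmle _ (hφLS n ω).1)
      have hsn : Real.sqrt n ≤ (n:ℝ) := by
        have h0 := Real.sqrt_le_sqrt (show (n:ℝ) ≤ (n:ℝ)*(n:ℝ) by nlinarith)
        rwa [Real.sqrt_mul_self (by positivity)] at h0
      calc Real.sqrt n * ((1 / |f' (φLS n ω)|) * Real.sqrt ((2/(n:ℝ)) * Vmax * l2)
              + (L/(n:ℝ)) * Vmax * l2)
          = (1 / |f' (φLS n ω)|) * (Real.sqrt n * Real.sqrt ((2/(n:ℝ)) * Vmax * l2))
              + (Real.sqrt n / (n:ℝ)) * (L*Vmax*l2) := by ring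
        _ = (1 / |f' (φLS n ω)|) * Real.sqrt (2*Vmax*l2)
              + (Real.sqrt n / (n:ℝ)) * (L*Vmax*l2) := by rw [e1]
        _ ≤ (1/m) * Real.sqrt (2*Vmax*l2) + 1 * (L*Vmax*l2) := by
            refine add_le_add (mul_le_mul_of_nonneg_right hb1 (Real.sqrt_nonneg _)) ?_
            refine mul_le_mul_of_nonneg_right ?_ (mul_nonneg (mul_nonneg hL0 hVmax0) hl2)
            rw [div_le_one hn0]
            exact hsn
        _ = C := by rw [hC]; ring
  -- limits, almost everywhere
  set c1 := (1/|f' φ|) * Real.sqrt (2 * Vmax * l2) with hc1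
  set c := (1/|f' φ|) * Real.sqrt (2 * Var * l4) with hc
  have hae : ∀ᵐ ω ∂μ,
      Tendsto (fun n : ℕ => Real.sqrt n * δ n ω) atTop (𝓝 (min c1 c)) := by
    filter_upwards [hslln1, hslln2] with ω h1 h2
    have hs : Tendsto (fun n : ℕ => S n ω) atTop (𝓝 (f φ)) := by
      have he : (fun n : ℕ => S n ω) = fun n : ℕ => (∑ i ∈ Finset.range n, X i ω) / n :=
        funext fun n => hS n ω
      rw [he]; exact h1
    have hLS : Tendsto (fun n : ℕ => φLS n ω) atTop (𝓝 φ) := by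
      have he : (fun n : ℕ => φLS n ω) = fun n : ℕ => H (S n ω) := funext fun n => hHLS n ω
      rw [he]
      have h0 := hHcont.tendsto.comp hs
      rwa [hHφ] at h0
    have ht : Tendsto (fun n : ℕ => |f' (φLS n ω)|) atTop (𝓝 (|f' φ|)) := by
      have h0 : Tendsto (fun n : ℕ => |F' (φLS n ω)|) atTop (𝓝 (|F' φ|)) :=
        ((hF'cont.tendsto φ).comp hLS).abs
      have he : (fun n : ℕ => |f' (φLS n ω)|) = fun n : ℕ => |F' (φLS n ω)| :=
        funext fun n => by rw [hF'eq _ (hφLS n ω).1]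
      rw [he, ← hF'eq φ hφI]
      exact h0
    have htinv : Tendsto (fun n : ℕ => 1 / |f' (φLS n ω)|) atTop (𝓝 (1 / |f' φ|)) :=
      tendsto_const_nhds.div ht (abs_ne_zero.2 hf'φ)
    have hVlim : Tendsto (fun n : ℕ => V n ω) atTop (𝓝 Var) := by
      have hVeq : (fun n : ℕ => ((∑ i ∈ Finset.range n, X i ω ^ 2) / n - (S n ω)^2)
          * ((n:ℝ)/((n:ℝ)-1))) =ᶠ[atTop] fun n : ℕ => V n ω := by
        filter_upwards [eventually_ge_atTop 2] with n hn
        have hn2 : (2:ℝ) ≤ (n:ℝ) := by exact_mod_cast hn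
        have hn0 : (n:ℝ) ≠ 0 := by linarith
        have hne : ((n:ℝ) - 1) ≠ 0 := by linarith
        rw [hV n ω]
        have hSn : (∑ i ∈ Finset.range n, X i ω) = n * S n ω := by
          rw [hS n ω]; field_simp
        have hsum : ∑ i ∈ Finset.range n, (X i ω - S n ω)^2
            = (∑ i ∈ Finset.range n, X i ω ^ 2) - n * (S n ω)^2 := by
          have expand : ∀ i ∈ Finset.range n,
              (X i ω - S n ω)^2 = X i ω ^2 - 2 * S n ω * X i ω + S n ω^2 := fun i _ => by ring
          rw [Finset.sum_congr rfl expand, Finset.sum_add_distrib, Finset.sum_sub_distrib,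
            ← Finset.mul_sum, hSn, Finset.sum_const, Finset.card_range, nsmul_eq_mul]
          ring
        rw [hsum]
        field_simp
        try ring
      have hmain := (h2.sub (hs.pow 2)).mul hratio
      have he2 : (E2 - (f φ)^2) * 1 = Var := by rw [hvarE]; ring
      rw [he2] at hmain
      exact hmain.congr' hVeq
    have hsA : Tendsto (fun n : ℕ => Real.sqrt n * A n ω) atTop
        (𝓝 (Real.sqrt (2*Var*l4))) := by
      have heq : (fun n : ℕ => Real.sqrt (2 * V n ω * l4)
          + ((8*(b-a)/3) * l4) * (Real.sqrt n/((n:ℝ)-1))) =ᶠ[atTop]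
          fun n : ℕ => Real.sqrt n * A n ω := by
        filter_upwards [eventually_ge_atTop 2] with n hn
        have hn2 : (2:ℝ) ≤ (n:ℝ) := by exact_mod_cast hn
        have hn0 : (n:ℝ) ≠ 0 := by linarith
        have hne : ((n:ℝ) - 1) ≠ 0 := by linarith
        simp only [hAdef]
        have e1 : Real.sqrt n * Real.sqrt ((2/(n:ℝ)) * V n ω * l4)
            = Real.sqrt (2 * V n ω * l4) := by
          rw [← Real.sqrt_mul (Nat.cast_nonneg n)]
          congr 1
          field_simp
        rw [mul_add, e1]
        congr 1
        field_simp
      have hlim1 : Tendsto (fun n : ℕ => Real.sqrt (2 * V n ω * l4)) atTop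
          (𝓝 (Real.sqrt (2*Var*l4))) := ((hVlim.const_mul 2).mul_const l4).sqrt
      have hlim2 : Tendsto (fun n : ℕ => ((8*(b-a)/3) * l4) * (Real.sqrt n/((n:ℝ)-1)))
          atTop (𝓝 0) := by
        simpa using hsqrtratio.const_mul ((8*(b-a)/3) * l4)
      have h0 := hlim1.add hlim2
      rw [add_zero] at h0
      exact h0.congr' heq
    have hA0 : Tendsto (fun n : ℕ => A n ω) atTop (𝓝 0) := by
      have heq : (fun n : ℕ => (Real.sqrt n * A n ω) * (Real.sqrt n)⁻¹) =ᶠ[atTop]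
          fun n : ℕ => A n ω := by
        filter_upwards [eventually_ge_atTop 1] with n hn
        have hs0 : Real.sqrt n ≠ 0 :=
          Real.sqrt_ne_zero'.2 (by exact_mod_cast Nat.cast_pos.2 hn)
        rw [mul_comm (Real.sqrt n) (A n ω), mul_assoc, mul_inv_cancel₀ hs0, mul_one]
      have h0 := hsA.mul hinvsqrt
      rw [mul_zero] at h0
      exact h0.congr' heq
    have hδ2lim : Tendsto (fun n : ℕ => Real.sqrt n * δ2 n ω) atTop (𝓝 c) := by
      have heq : (fun n : ℕ => (1 / |f' (φLS n ω)|) * (Real.sqrt n * A n ω)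
          + (L/2) * ((Real.sqrt n * A n ω) * A n ω)) =ᶠ[atTop]
          fun n : ℕ => Real.sqrt n * δ2 n ω := by
        filter_upwards [] with n
        rw [hδ2A n ω]
        ring
      have hlim := (htinv.mul hsA).add ((hsA.mul hA0).const_mul (L/2))
      have he2 : (1/|f' φ|) * Real.sqrt (2*Var*l4)
          + (L/2) * (Real.sqrt (2*Var*l4) * 0) = c := by rw [hc]; ring
      rw [he2] at hlim
      exact hlim.congr' heq
    have hδ1lim : Tendsto (fun n : ℕ => Real.sqrt n * δ1 n ω) atTop (𝓝 c1) := by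
      have heq : (fun n : ℕ => (1 / |f' (φLS n ω)|) * Real.sqrt (2*Vmax*l2)
          + (L*Vmax*l2) * (Real.sqrt n)⁻¹) =ᶠ[atTop]
          fun n : ℕ => Real.sqrt n * δ1 n ω := by
        filter_upwards [eventually_ge_atTop 1] with n hn
        have hn0' : (0:ℝ) < n := by exact_mod_cast hn
        have hn0 : (n:ℝ) ≠ 0 := ne_of_gt hn0'
        have hs0 : Real.sqrt n ≠ 0 := Real.sqrt_ne_zero'.2 hn0'
        have hss : Real.sqrt n * Real.sqrt n = (n:ℝ) :=
          Real.mul_self_sqrt (Nat.cast_nonneg n)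
        have e1 : Real.sqrt n * Real.sqrt ((2/(n:ℝ)) * Vmax * l2)
            = Real.sqrt (2*Vmax*l2) := by
          rw [← Real.sqrt_mul (Nat.cast_nonneg n)]
          congr 1
          field_simp
        rw [hδ1A n ω]
        have e2 : Real.sqrt n / (n:ℝ) = (Real.sqrt n)⁻¹ := by
          nth_rewrite 2 [← hss]
          rw [div_mul_eq_div_div, div_self hs0, one_div]
        rw [← e2, ← e1]
        ring
      have hlim := (htinv.mul_const (Real.sqrt (2*Vmax*l2))).add
        ((hinvsqrt.const_mul (L*Vmax*l2)))
      have he2 : (1/|f' φ|) * Real.sqrt (2*Vmax*l2) + (L*Vmax*l2) * 0 = c1 := by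
        rw [hc1]; ring
      rw [he2] at hlim
      exact hlim.congr' heq
    have hnmin : (fun n : ℕ => min (Real.sqrt n * δ1 n ω) (Real.sqrt n * δ2 n ω))
        =ᶠ[atTop] fun n : ℕ => Real.sqrt n * δ n ω := by
      filter_upwards [eventually_ge_atTop 2] with n hn
      rw [hδ n ω, if_neg (by omega : n ≠ 1)]
      rcases le_total (δ1 n ω) (δ2 n ω) with h | h
      · rw [min_eq_left h, min_eq_left (mul_le_mul_of_nonneg_left h (Real.sqrt_nonneg _))]
      · rw [min_eq_right h, min_eq_right (mul_le_mul_of_nonneg_left h (Real.sqrt_nonneg _))]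
    exact (hδ1lim.min hδ2lim).congr' hnmin
  -- dominated convergence
  have hFmeas : ∀ n : ℕ, AEStronglyMeasurable (fun ω => Real.sqrt n * δ n ω) μ :=
    fun n => ((hδmeas n).const_mul (Real.sqrt n)).aestronglyMeasurable
  have hDCT : Tendsto (fun n : ℕ => ∫ ω, Real.sqrt n * δ n ω ∂μ) atTop (𝓝 (min c1 c)) := by
    have h0 := MeasureTheory.tendsto_integral_of_dominated_convergence
      (F := fun (n : ℕ) ω => Real.sqrt n * δ n ω) (f := fun _ => min c1 c)
      (fun _ => C) hFmeas (integrable_const C)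
      (fun n => Filter.Eventually.of_forall (fun ω => hFbound n ω)) hae
    simpa using h0
  have hgoal : (fun n : ℕ => Real.sqrt n * ∫ ω, δ n ω ∂μ)
      = fun n : ℕ => ∫ ω, Real.sqrt n * δ n ω ∂μ :=
    funext fun n => (integral_const_mul _ _).symm
  rw [hgoal, hDCT.limsup_eq]
  refine (min_le_right c1 c).trans (le_of_eq ?_)
  rw [hc, show 2*Var*l4 = Var*(2*l4) by ring, Real.sqrt_mul hvar0]
  ring
end

section
/- (Deterministic Taylor reduction, Eq. (B7).) Let f : Φ → ℝ be twice continuously differentiable, injective, with f′(φ′) ≠ 0 for all φ′ in the compact interval Φ = [φ_min, φ_max]; let g = f⁻¹ on R_f = f(Φ) and L = max_{φ′ ∈ Φ} |f′(φ′)⁻³ · f″(φ′)|. For any s ∈ ℝ, let s^LS = argmin_{r ∈ R_f} |r − s| and φ^LS = g(s^LS). Then for every φ ∈ Φ, |φ^LS − φ| ≤ |g′(s^LS)| · |s − f(φ)| + (L/2) · |s − f(φ)|². -/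
open Set

lemma taylor_quad_bound {g g1 g2 : ℝ → ℝ} {a b L : ℝ}
    (hgc : ContinuousOn g (Icc a b)) (hg1c : ContinuousOn g1 (Icc a b))
    (hgd : ∀ t ∈ Ioo a b, HasDerivAt g (g1 t) t)
    (hg1d : ∀ t ∈ Ioo a b, HasDerivAt g1 (g2 t) t)
    (hLb : ∀ t ∈ Ioo a b, |g2 t| ≤ L)
    {x y : ℝ} (hx : x ∈ Icc a b) (hy : y ∈ Icc a b) :
    |g y - g x - g1 x * (y - x)| ≤ L / 2 * (y - x) ^ 2 := by
  set F : ℝ → ℝ := fun t => g t - g x - g1 x * (t - x) with hF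
  set F' : ℝ → ℝ := fun t => g1 t - g1 x with hF'
  set G : ℝ → ℝ := fun t => (t - x) ^ 2 with hG
  set G' : ℝ → ℝ := fun t => 2 * (t - x) with hG'
  have hFc : ∀ u v : ℝ, u ∈ Icc a b → v ∈ Icc a b → ContinuousOn F (Icc u v) := by
    intro u v hu hv
    have : ContinuousOn g (Icc u v) := hgc.mono (Icc_subset_Icc hu.1 hv.2)
    exact (this.sub continuousOn_const).sub
      (continuousOn_const.mul (continuousOn_id.sub continuousOn_const))
  have hFd : ∀ t ∈ Ioo a b, HasDerivAt F (F' t) t := by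
    intro t ht
    have h1 : HasDerivAt (fun t : ℝ => g1 x * (t - x)) (g1 x * 1) t :=
      ((hasDerivAt_id t).sub_const x).const_mul (g1 x)
    have := ((hgd t ht).sub_const (g x)).sub h1
    have h2 : HasDerivAt F _ t := this
    simpa [F', mul_one] using h2
  have hGc : ∀ u v : ℝ, ContinuousOn G (Icc u v) := by
    intro u v
    exact ((continuousOn_id.sub continuousOn_const).pow 2)
  have hGd : ∀ t : ℝ, HasDerivAt G (G' t) t := by
    intro t
    have := ((hasDerivAt_id t).sub_const x).pow 2
    have h2 : HasDerivAt G _ t := this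
    simpa [G', mul_comm] using h2
  have hFx : F x = 0 := by simp [F]
  have hGx : G x = 0 := by simp [G]
  have key : ∀ d ∈ Ioo a b, F y = (y - x) ^ 2 * g2 d / 2 → |F y| ≤ L / 2 * (y - x) ^ 2 := by
    intro d hd hFy
    rw [hFy, abs_div, abs_mul, abs_pow, sq_abs]
    rw [abs_of_nonneg (by norm_num : (0:ℝ) ≤ 2)]
    rw [div_le_iff₀ (by norm_num : (0:ℝ) < 2)]
    have := hLb d hd
    nlinarith [sq_nonneg (y - x), abs_nonneg (g2 d)]
  have finish : ∀ c d : ℝ, c - x ≠ 0 → d ∈ Ioo a b →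
      (y - x) ^ 2 * (g1 c - g1 x) = F y * (2 * (c - x)) →
      g1 c - g1 x = g2 d * (c - x) → |F y| ≤ L / 2 * (y - x) ^ 2 := by
    intro c d hcx hd hceq hslope
    apply key d hd
    have h2 : ((y - x) ^ 2 * g2 d) * (c - x) = (F y * 2) * (c - x) := by
      have := hceq
      rw [hslope] at this
      linear_combination this
    have h3 := mul_right_cancel₀ hcx h2
    linear_combination -h3 / 2
  rcases lt_trichotomy x y with hxy | hxy | hxy
  · obtain ⟨c, hc, hkey⟩ := exists_ratio_hasDerivAt_eq_ratio_slope F F' hxy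
      (hFc x y hx hy) (fun t ht => hFd t ⟨lt_of_le_of_lt hx.1 ht.1, lt_of_lt_of_le ht.2 hy.2⟩)
      G G' (hGc x y) (fun t _ => hGd t)
    have hc' : c ∈ Ioo a b := ⟨lt_of_le_of_lt hx.1 hc.1, lt_of_lt_of_le hc.2 hy.2⟩
    obtain ⟨d, hd, hslope⟩ := exists_hasDerivAt_eq_slope g1 g2 hc.1
      (hg1c.mono (Icc_subset_Icc hx.1 hc'.2.le))
      (fun t ht => hg1d t ⟨lt_of_le_of_lt hx.1 ht.1, lt_trans ht.2 hc'.2⟩)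
    have hd' : d ∈ Ioo a b := ⟨lt_of_le_of_lt hx.1 hd.1, lt_of_lt_of_le (hd.2.trans hc.2) hy.2⟩
    have hcx : c - x ≠ 0 := sub_ne_zero.2 (ne_of_gt hc.1)
    rw [eq_div_iff hcx] at hslope
    refine finish c d hcx hd' ?_ (by linear_combination -hslope)
    simpa [hFx, hGx] using hkey
  · simp [F, hxy]
  · obtain ⟨c, hc, hkey⟩ := exists_ratio_hasDerivAt_eq_ratio_slope F F' hxy
      (hFc y x hy hx) (fun t ht => hFd t ⟨lt_of_le_of_lt hy.1 ht.1, lt_of_lt_of_le ht.2 hx.2⟩)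
      G G' (hGc y x) (fun t _ => hGd t)
    have hc' : c ∈ Ioo a b := ⟨lt_of_le_of_lt hy.1 hc.1, lt_of_lt_of_le hc.2 hx.2⟩
    obtain ⟨d, hd, hslope⟩ := exists_hasDerivAt_eq_slope g1 g2 hc.2
      (hg1c.mono (Icc_subset_Icc hc'.1.le hx.2))
      (fun t ht => hg1d t ⟨lt_trans hc'.1 ht.1, lt_of_lt_of_le ht.2 hx.2⟩)
    have hd' : d ∈ Ioo a b := ⟨lt_of_le_of_lt hy.1 (hc.1.trans hd.1), lt_of_lt_of_le hd.2 hx.2⟩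
    have hxc : x - c ≠ 0 := sub_ne_zero.2 (ne_of_gt hc.2)
    have hcx : c - x ≠ 0 := fun h => hxc (by linarith [sub_eq_zero.1 h])
    rw [eq_div_iff hxc] at hslope
    refine finish c d hcx hd' ?_ (by linear_combination hslope)
    have : (G x - G y) * F' c = (F x - F y) * G' c := hkey
    simp only [hFx, hGx] at this
    have h5 : (0 - G y) * F' c = (0 - F y) * G' c := this
    have : G y * F' c = F y * G' c := by linarith [h5]
    simpa using this


/-- **Deterministic Taylor reduction** (Eq. (B7)): with `g = f⁻¹` on `R_f = f(Φ)`,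
`L = max_{φ′ ∈ Φ} |f′(φ′)⁻³ · f″(φ′)|`, `s^LS` the point of `R_f` nearest to `s`,
and `φ^LS = g(s^LS)`, for every `φ ∈ Φ`:
`|φ^LS − φ| ≤ |g′(s^LS)| · |s − f(φ)| + (L/2) · |s − f(φ)|²`,
where `g′(s^LS) = 1/f′(g(s^LS))`. -/
theorem taylor_reduction
    (φmin φmax : ℝ) (hΦ : φmin < φmax)
    (f f' f'' : ℝ → ℝ)
    (hf' : ∀ x ∈ Set.Icc φmin φmax, HasDerivWithinAt f (f' x) (Set.Icc φmin φmax) x)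
    (hf'' : ∀ x ∈ Set.Icc φmin φmax, HasDerivWithinAt f' (f'' x) (Set.Icc φmin φmax) x)
    (hf''cont : ContinuousOn f'' (Set.Icc φmin φmax))
    (hinj : Set.InjOn f (Set.Icc φmin φmax))
    (hf'ne : ∀ x ∈ Set.Icc φmin φmax, f' x ≠ 0)
    (g : ℝ → ℝ) (hg : ∀ x ∈ Set.Icc φmin φmax, g (f x) = x)
    (L : ℝ)
    (hL : IsGreatest ((fun x => |(f' x)⁻¹ ^ 3 * f'' x|) '' Set.Icc φmin φmax) L)
    (s sLS : ℝ)
    (hmem : sLS ∈ f '' Set.Icc φmin φmax)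
    (hmin : ∀ r ∈ f '' Set.Icc φmin φmax, |sLS - s| ≤ |r - s|)
    (φ : ℝ) (hφ : φ ∈ Set.Icc φmin φmax) :
    |g sLS - φ| ≤ |(f' (g sLS))⁻¹| * |s - f φ| + (L / 2) * |s - f φ| ^ 2 := by
  set I := Set.Icc φmin φmax with hI
  have hfc : ContinuousOn f I := fun x hx => (hf' x hx).continuousWithinAt
  have hf'c : ContinuousOn f' I := fun x hx => (hf'' x hx).continuousWithinAt
  set J := f '' I with hJ
  set m := sInf J with hm
  set M := sSup J with hM
  have hJIcc : J = Icc m M := ContinuousOn.image_Icc hΦ.le hfc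
  have hmM : m ≤ M := by
    have : (f φmin) ∈ J := mem_image_of_mem f (left_mem_Icc.2 hΦ.le)
    rw [hJIcc] at this; exact le_trans this.1 this.2
  -- basic inverse facts
  have hgf : ∀ r ∈ J, f (g r) = r := by rintro r ⟨x, hx, rfl⟩; rw [hg x hx]
  have hgmem : ∀ r ∈ J, g r ∈ I := by rintro r ⟨x, hx, rfl⟩; rw [hg x hx]; exact hx
  -- continuity of g on J
  haveI : CompactSpace I := isCompact_iff_compactSpace.mp isCompact_Icc
  have hbij : Set.BijOn f I J := ⟨mapsTo_image f I, hinj, surjOn_image f I⟩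
  have hcont : Continuous ⇑(Set.BijOn.equiv f hbij) :=
    hfc.mapsToRestrict hbij.mapsTo
  let homeo := hcont.homeoOfEquivCompactToT2
  have hgcont : ContinuousOn g J := by
    rw [continuousOn_iff_continuous_restrict]
    have hrestr : J.domRestrict g = Subtype.val ∘ ⇑homeo.symm := by
      funext r
      have h1 : homeo (homeo.symm r) = r := homeo.apply_symm_apply r
      have h2 : f ↑(homeo.symm r) = ↑r := congrArg Subtype.val h1
      simp only [Function.comp_apply, domRestrict_apply]
      rw [← h2, hg _ (homeo.symm r).2]
    rw [hrestr]
    exact continuous_subtype_val.comp homeo.symm.continuous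
  -- endpoints
  have hmono := hfc.strictMonoOn_of_injOn_Icc' hΦ.le hinj
  have hend : (f φmin = m ∧ f φmax = M) ∨ (f φmin = M ∧ f φmax = m) := by
    have hminJ : f φmin ∈ Icc m M := hJIcc ▸ mem_image_of_mem f (left_mem_Icc.2 hΦ.le)
    have hmaxJ : f φmax ∈ Icc m M := hJIcc ▸ mem_image_of_mem f (right_mem_Icc.2 hΦ.le)
    rcases hmono with hmono | hanti
    · left
      constructor
      · refine le_antisymm ?_ hminJ.1
        have : IsLeast J (f φmin) := by
          refine ⟨mem_image_of_mem f (left_mem_Icc.2 hΦ.le), ?_⟩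
          rintro r ⟨x, hx, rfl⟩
          exact hmono.monotoneOn (left_mem_Icc.2 hΦ.le) hx hx.1
        exact this.2 (hJIcc ▸ left_mem_Icc.2 hmM)
      · refine le_antisymm hmaxJ.2 ?_
        have : ∀ r ∈ J, r ≤ f φmax := by
          rintro r ⟨x, hx, rfl⟩
          exact hmono.monotoneOn hx (right_mem_Icc.2 hΦ.le) hx.2
        exact this M (hJIcc ▸ right_mem_Icc.2 hmM)
    · right
      constructor
      · refine le_antisymm hminJ.2 ?_
        have : ∀ r ∈ J, r ≤ f φmin := by
          rintro r ⟨x, hx, rfl⟩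
          exact hanti.antitoneOn (left_mem_Icc.2 hΦ.le) hx hx.1
        exact this M (hJIcc ▸ right_mem_Icc.2 hmM)
      · refine le_antisymm ?_ (hJIcc ▸ mem_image_of_mem f (right_mem_Icc.2 hΦ.le) : f φmax ∈ Icc m M).1
        have : ∀ r ∈ J, f φmax ≤ r := by
          rintro r ⟨x, hx, rfl⟩
          exact hanti.antitoneOn hx (right_mem_Icc.2 hΦ.le) hx.2
        exact this m (hJIcc ▸ left_mem_Icc.2 hmM)
  have hgint : ∀ r ∈ Ioo m M, g r ∈ Ioo φmin φmax := by
    intro r hr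
    have hrJ : r ∈ J := by rw [hJIcc]; exact Ioo_subset_Icc_self hr
    have h1 : g r ∈ I := hgmem r hrJ
    constructor
    · rcases h1.1.lt_or_eq with h | h
      · exact h
      · exfalso
        have : r = f φmin := by rw [← hgf r hrJ, ← h]
        rcases hend with ⟨h2, _⟩ | ⟨h2, _⟩
        · exact absurd (this ▸ h2) (ne_of_gt hr.1)
        · exact absurd (this ▸ h2) (ne_of_lt hr.2)
    · rcases h1.2.lt_or_eq.symm with h | h
      · exfalso
        have : r = f φmax := by rw [← hgf r hrJ, h]
        rcases hend with ⟨_, h2⟩ | ⟨_, h2⟩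
        · exact absurd (this ▸ h2) (ne_of_lt hr.2)
        · exact absurd (this ▸ h2) (ne_of_gt hr.1)
      · exact h
  -- derivatives of g on the interior of J
  set g1 : ℝ → ℝ := fun r => (f' (g r))⁻¹ with hg1def
  set g2 : ℝ → ℝ := fun r => -(f'' (g r) * (f' (g r))⁻¹) / (f' (g r)) ^ 2 with hg2def
  have hJnhds : ∀ r ∈ Ioo m M, J ∈ nhds r := fun r hr => by
    rw [hJIcc]; exact Icc_mem_nhds hr.1 hr.2
  have hgd : ∀ r ∈ Ioo m M, HasDerivAt g (g1 r) r := by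
    intro r hr
    have hgI : g r ∈ Ioo φmin φmax := hgint r hr
    have hgI' : g r ∈ I := Ioo_subset_Icc_self hgI
    have hfd : HasDerivAt f (f' (g r)) (g r) :=
      (hf' _ hgI').hasDerivAt (Icc_mem_nhds hgI.1 hgI.2)
    refine HasDerivAt.of_local_left_inverse (hgcont.continuousAt (hJnhds r hr)) hfd
      (hf'ne _ hgI') ?_
    filter_upwards [hJnhds r hr] with y hy using hgf y hy
  have hg1d : ∀ r ∈ Ioo m M, HasDerivAt g1 (g2 r) r := by
    intro r hr
    have hgI : g r ∈ Ioo φmin φmax := hgint r hr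
    have hgI' : g r ∈ I := Ioo_subset_Icc_self hgI
    have hfd2 : HasDerivAt f' (f'' (g r)) (g r) :=
      (hf'' _ hgI').hasDerivAt (Icc_mem_nhds hgI.1 hgI.2)
    have hcomp : HasDerivAt (fun t => f' (g t)) (f'' (g r) * g1 r) r :=
      HasDerivAt.comp r hfd2 (hgd r hr)
    have := hcomp.inv (hf'ne _ hgI')
    have h3 : HasDerivAt g1 _ r := this
    simpa [hg1def, hg2def] using h3
  have hLb : ∀ r ∈ Ioo m M, |g2 r| ≤ L := by
    intro r hr
    have hgI' : g r ∈ I := Ioo_subset_Icc_self (hgint r hr)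
    have h1 : |(f' (g r))⁻¹ ^ 3 * f'' (g r)| ≤ L := hL.2 ⟨g r, hgI', rfl⟩
    have hne := hf'ne _ hgI'
    have h2 : g2 r = -((f' (g r))⁻¹ ^ 3 * f'' (g r)) := by
      rw [hg2def]
      field_simp
    rw [h2, abs_neg]
    exact h1
  have hg1c : ContinuousOn g1 J :=
    (hf'c.comp hgcont hgmem).inv₀ fun r hr => hf'ne _ (hgmem r hr)
  -- contraction
  have hyJ : f φ ∈ J := mem_image_of_mem f hφ
  have hxIcc : sLS ∈ Icc m M := hJIcc ▸ hmem
  have hyIcc : f φ ∈ Icc m M := hJIcc ▸ hyJ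
  have hcontr : |sLS - f φ| ≤ |s - f φ| := by
    rcases le_or_gt m s with hms | hms
    · rcases le_or_gt s M with hsM | hsM
      · have hsJ : s ∈ J := by rw [hJIcc]; exact ⟨hms, hsM⟩
        have h0 := hmin s hsJ
        simp only [sub_self, abs_zero] at h0
        have hss : sLS = s := by
          have h1 : |sLS - s| = 0 := le_antisymm h0 (abs_nonneg _)
          have := abs_eq_zero.1 h1; linarith
        rw [hss]
      · have h2 := hmin (f φ) hyJ
        have e1 : |sLS - s| = s - sLS := by
          rw [abs_sub_comm, abs_of_nonneg (by linarith [hxIcc.2])]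
        have e2 : |f φ - s| = s - f φ := by
          rw [abs_sub_comm, abs_of_nonneg (by linarith [hyIcc.2])]
        rw [e1, e2] at h2
        rw [abs_of_nonneg (by linarith : (0:ℝ) ≤ sLS - f φ),
          abs_of_nonneg (by linarith [hyIcc.2] : (0:ℝ) ≤ s - f φ)]
        linarith [hxIcc.2]
    · have h2 := hmin (f φ) hyJ
      have e1 : |sLS - s| = sLS - s := abs_of_nonneg (by linarith [hxIcc.1])
      have e2 : |f φ - s| = f φ - s := abs_of_nonneg (by linarith [hyIcc.1])
      rw [e1, e2] at h2
      rw [abs_of_nonpos (by linarith : sLS - f φ ≤ 0),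
        abs_of_nonpos (by linarith [hyIcc.1] : s - f φ ≤ 0)]
      linarith [hxIcc.1]
  -- Taylor bound
  have hgcont' : ContinuousOn g (Icc m M) := hJIcc ▸ hgcont
  have hg1c' : ContinuousOn g1 (Icc m M) := hJIcc ▸ hg1c
  have hTay : |g (f φ) - g sLS - g1 sLS * (f φ - sLS)| ≤ L / 2 * (f φ - sLS) ^ 2 :=
    taylor_quad_bound hgcont' hg1c' hgd hg1d hLb hxIcc hyIcc
  have hgy : g (f φ) = φ := hg φ hφ
  have hL0 : (0:ℝ) ≤ L := by
    obtain ⟨z, hz, hzL⟩ := hL.1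
    rw [← hzL]; exact abs_nonneg _
  have h1 : |f φ - sLS| ≤ |s - f φ| := by rw [abs_sub_comm]; exact hcontr
  have h3 : |g sLS - φ| ≤ L / 2 * (f φ - sLS) ^ 2 + |g1 sLS| * |f φ - sLS| :=
    calc |g sLS - φ| = |g (f φ) - g sLS| := by rw [hgy, abs_sub_comm]
      _ = |(g (f φ) - g sLS - g1 sLS * (f φ - sLS)) + g1 sLS * (f φ - sLS)| := by
          rw [sub_add_cancel]
      _ ≤ |g (f φ) - g sLS - g1 sLS * (f φ - sLS)| + |g1 sLS * (f φ - sLS)| := abs_add_le _ _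
      _ ≤ L / 2 * (f φ - sLS) ^ 2 + |g1 sLS| * |f φ - sLS| := by
          rw [abs_mul]; exact add_le_add hTay le_rfl
  have h4 : (f φ - sLS) ^ 2 ≤ |s - f φ| ^ 2 := by
    rw [← sq_abs (f φ - sLS)]
    exact pow_le_pow_left₀ (abs_nonneg _) h1 2
  have h5 := mul_le_mul_of_nonneg_left h1 (abs_nonneg (g1 sLS))
  have h6 := mul_le_mul_of_nonneg_left h4 (by linarith : (0:ℝ) ≤ L / 2)
  linarith
end
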